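/- arXiv:1302.2337 — 10 statements merged into one kernel-verified Lean document; each statement's English description precedes it below -/
import Mathlib

section
/- Let x₀, x₁ ∈ ℝ with x₀ ≠ x₁, and let y₀, y₁ ≥ 0 be not both zero. Suppose |x₁ − x₀| ≤ (1/2)·[π·(y₁² + y₀²) + 4y₁y₀]. Then the unique solution δ* ∈ (−2π,2π) of f(δ, y₀², y₁²) = x₁ − x₀ satisfies −π ≤ δ* ≤ π, δ* ≠ 0, and the Legendre–Fenchel transform satisfies Λ*(x₀, y₀, x₁, y₁) = (δ*)²·(y₁² + y₀² − 2y₁y₀·cos(δ*/2)) / (2·sin²(δ*/2)). -/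
set_option maxHeartbeats 1000000

open Real Set Topology Filter



/-- The function `f(δ, v₀, v₁)` appearing in the δ-equation:
`f(δ) = [(v₁+v₀)(δ − sin δ) − 2√(v₁v₀)(δ·cos(δ/2) − 2·sin(δ/2))] / (2·sin²(δ/2))`
for `δ ≠ 0`, and `f(0) = 0`. -/
noncomputable def fdelta (δ v0 v1 : ℝ) : ℝ :=
  if δ = 0 then 0 else
    ((v1 + v0) * (δ - Real.sin δ) -
      2 * Real.sqrt (v1 * v0) * (δ * Real.cos (δ / 2) - 2 * Real.sin (δ / 2))) /
    (2 * Real.sin (δ / 2) ^ 2)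

/-- The limiting cumulant generating function `Λ` for the Grushin model with
initial point `(x₀, y₀)`: for `0 < |δ| < π`,
`Λ(δ,γ) = [(4δ²y₀² + γ²)·sin(δ/2) + 4x₀δ²·cos(δ/2) + 4y₀γδ] / (4δ·cos(δ/2))`;
`Λ(0,γ) = γ²/8 + y₀γ`; and `Λ(δ,γ) = +∞` for `|δ| ≥ π`. -/
noncomputable def Lam (x0 y0 : ℝ) (δ γ : ℝ) : EReal :=
  if |δ| < Real.pi then
    if δ = 0 then ((γ ^ 2 / 8 + y0 * γ : ℝ) : EReal)
    else ((((4 * δ ^ 2 * y0 ^ 2 + γ ^ 2) * Real.sin (δ / 2) + 4 * x0 * δ ^ 2 * Real.cos (δ / 2) +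
        4 * y0 * γ * δ) / (4 * δ * Real.cos (δ / 2)) : ℝ) : EReal)
  else ⊤

/-- The Legendre–Fenchel transform `Λ*(x₀,y₀,x₁,y₁) = sup_{(δ,γ)} [x₁δ + y₁γ − Λ(δ,γ)]`. -/
noncomputable def LamStar (x0 y0 x1 y1 : ℝ) : EReal :=
  ⨆ p : ℝ × ℝ, (((x1 * p.1 + y1 * p.2 : ℝ) : EReal) - Lam x0 y0 p.1 p.2)

lemma trig1 {t : ℝ} (h0 : 0 < t) (hπ : t < π) : 0 < Real.sin t - t * Real.cos t := by
  rcases le_or_gt (Real.cos t) 0 with hc | hc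
  · have hs : 0 < Real.sin t := Real.sin_pos_of_pos_of_lt_pi h0 hπ
    nlinarith
  · have ht2 : t < π / 2 := by
      by_contra hle
      push_neg at hle
      have : Real.cos t ≤ 0 := Real.cos_nonpos_of_pi_div_two_le_of_le hle (by linarith [Real.pi_pos])
      linarith
    have := Real.lt_tan h0 ht2
    rw [Real.tan_eq_sin_div_cos] at this
    have := (lt_div_iff₀ hc).mp this
    linarith

lemma trig2 {t : ℝ} (h0 : 0 < t) : 0 < t - Real.sin t * Real.cos t := by
  have : Real.sin (2 * t) < 2 * t := Real.sin_lt (by linarith)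
  rw [Real.sin_two_mul] at this
  nlinarith

lemma trig3 {t : ℝ} (h0 : 0 < t) (hπ : t < π) :
    0 ≤ t * (1 + Real.cos t ^ 2) - 2 * Real.sin t * Real.cos t := by
  rcases le_or_gt (Real.cos t) 0 with hc | hc
  · have hs : 0 ≤ Real.sin t := le_of_lt (Real.sin_pos_of_pos_of_lt_pi h0 hπ)
    nlinarith [sq_nonneg (Real.cos t)]
  · have hs : Real.sin t ≤ t := (Real.sin_lt h0).le
    nlinarith [sq_nonneg (1 - Real.cos t), sq_nonneg (Real.cos t)]

noncomputable def fex (p q δ : ℝ) : ℝ :=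
  (p * (δ - Real.sin δ) - q * (δ * Real.cos (δ / 2) - 2 * Real.sin (δ / 2))) /
    (2 * Real.sin (δ / 2) ^ 2)

lemma sin_half_pos {δ : ℝ} (h0 : 0 < δ) (h2 : δ < 2 * π) : 0 < Real.sin (δ / 2) :=
  Real.sin_pos_of_pos_of_lt_pi (by linarith) (by linarith)

lemma fex_pos {p q δ : ℝ} (hp : 0 < p) (hq : 0 ≤ q) (h0 : 0 < δ) (h2 : δ < 2 * π) :
    0 < fex p q δ := by
  have hs := sin_half_pos h0 h2
  have h1 : 0 < Real.sin (δ/2) - (δ/2) * Real.cos (δ/2) := trig1 (by linarith) (by linarith)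
  have h2' : Real.sin δ < δ := Real.sin_lt h0
  apply div_pos _ (by positivity)
  nlinarith

-- derivative of fex
lemma fex_hasDeriv {p q δ : ℝ} (h0 : 0 < δ) (h2 : δ < 2 * π) :
    HasDerivAt (fex p q)
      (((p * (1 - Real.cos δ) - q * (Real.cos (δ/2) + δ * (-Real.sin (δ/2) * (1/2)) - 2 * (Real.cos (δ/2) * (1/2)))) * (2 * Real.sin (δ/2)^2)
        - (p * (δ - Real.sin δ) - q * (δ * Real.cos (δ / 2) - 2 * Real.sin (δ / 2))) * (2 * (2 * Real.sin (δ/2) * (Real.cos (δ/2) * (1/2)))))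
        / (2 * Real.sin (δ/2)^2)^2) δ := by
  have hs := sin_half_pos h0 h2
  have hhalf : HasDerivAt (fun x : ℝ => x / 2) (1/2) δ := (hasDerivAt_id δ).div_const 2
  have hsin : HasDerivAt (fun x : ℝ => Real.sin (x/2)) (Real.cos (δ/2) * (1/2)) δ :=
    (Real.hasDerivAt_sin (δ/2)).comp (h := fun x : ℝ => x / 2) δ hhalf
  have hcos : HasDerivAt (fun x : ℝ => Real.cos (x/2)) (-Real.sin (δ/2) * (1/2)) δ :=
    (Real.hasDerivAt_cos (δ/2)).comp (h := fun x : ℝ => x / 2) δ hhalf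
  have hnum : HasDerivAt (fun x : ℝ => p * (x - Real.sin x) - q * (x * Real.cos (x / 2) - 2 * Real.sin (x / 2)))
      (p * (1 - Real.cos δ) - q * (Real.cos (δ/2) + δ * (-Real.sin (δ/2) * (1/2)) - 2 * (Real.cos (δ/2) * (1/2)))) δ := by
    have h1 : HasDerivAt (fun x : ℝ => x - Real.sin x) (1 - Real.cos δ) δ :=
      (hasDerivAt_id δ).sub (Real.hasDerivAt_sin δ)
    have h2 : HasDerivAt (fun x : ℝ => x * Real.cos (x/2)) (Real.cos (δ/2) + δ * (-Real.sin (δ/2) * (1/2))) δ := by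
      simpa using (hasDerivAt_id δ).fun_mul hcos
    exact ((h1.const_mul p).sub (((h2.sub (hsin.const_mul 2)).const_mul q)))
  have hden : HasDerivAt (fun x : ℝ => 2 * Real.sin (x/2)^2) (2 * (2 * Real.sin (δ/2) * (Real.cos (δ/2) * (1/2)))) δ := by
    simpa using ((hsin.pow 2).const_mul 2)
  exact hnum.div hden (by positivity)

lemma fex_deriv_pos {p q δ : ℝ} (hp : 0 < p) (hq : 0 ≤ q) (h0 : 0 < δ) (h2 : δ < 2 * π) :
    0 < ((p * (1 - Real.cos δ) - q * (Real.cos (δ/2) + δ * (-Real.sin (δ/2) * (1/2)) - 2 * (Real.cos (δ/2) * (1/2)))) * (2 * Real.sin (δ/2)^2)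
        - (p * (δ - Real.sin δ) - q * (δ * Real.cos (δ / 2) - 2 * Real.sin (δ / 2))) * (2 * (2 * Real.sin (δ/2) * (Real.cos (δ/2) * (1/2)))))
        / (2 * Real.sin (δ/2)^2)^2 := by
  have hs := sin_half_pos h0 h2
  have hsδ : Real.sin δ = 2 * Real.sin (δ/2) * Real.cos (δ/2) := by
    rw [← Real.sin_two_mul, mul_div_cancel₀]; norm_num
  have hcδ : Real.cos δ = 1 - 2 * Real.sin (δ/2)^2 := by
    have := Real.sin_sq_eq_half_sub (δ/2)
    rw [show 2 * (δ / 2) = δ by ring] at this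
    linarith
  have heq : ((p * (1 - Real.cos δ) - q * (Real.cos (δ/2) + δ * (-Real.sin (δ/2) * (1/2)) - 2 * (Real.cos (δ/2) * (1/2)))) * (2 * Real.sin (δ/2)^2)
        - (p * (δ - Real.sin δ) - q * (δ * Real.cos (δ / 2) - 2 * Real.sin (δ / 2))) * (2 * (2 * Real.sin (δ/2) * (Real.cos (δ/2) * (1/2)))))
      = 2 * Real.sin (δ/2) * (2 * p * (Real.sin (δ/2) - (δ/2) * Real.cos (δ/2))
          + q * ((δ/2) * (1 + Real.cos (δ/2)^2) - 2 * Real.sin (δ/2) * Real.cos (δ/2))) := by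
    rw [hsδ, hcδ]
    linear_combination (4*p*Real.sin (δ/2)^2 + q*δ*Real.sin (δ/2)) * Real.sin_sq_add_cos_sq (δ/2)
  rw [heq]
  have h1 := trig1 (t := δ/2) (by linarith) (by linarith)
  have h3 := trig3 (t := δ/2) (by linarith) (by linarith)
  have hb : 0 < 2 * p * (Real.sin (δ/2) - (δ/2) * Real.cos (δ/2))
          + q * ((δ/2) * (1 + Real.cos (δ/2)^2) - 2 * Real.sin (δ/2) * Real.cos (δ/2)) := by
    nlinarith
  positivity

lemma fex_contAt {p q δ : ℝ} (h0 : 0 < δ) (h2 : δ < 2 * π) : ContinuousAt (fex p q) δ :=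
  (fex_hasDeriv (p := p) (q := q) h0 h2).continuousAt

lemma fex_mono {p q : ℝ} (hp : 0 < p) (hq : 0 ≤ q) :
    StrictMonoOn (fex p q) (Ioo 0 (2 * π)) := by
  apply strictMonoOn_of_deriv_pos (convex_Ioo _ _)
  · exact fun x hx => (fex_contAt hx.1 hx.2).continuousWithinAt
  · intro x hx
    rw [interior_Ioo] at hx
    rw [(fex_hasDeriv hx.1 hx.2).deriv]
    exact fex_deriv_pos hp hq hx.1 hx.2

lemma fex_pi {p q : ℝ} : fex p q π = p * π / 2 + q := by
  have h2 : Real.sin (π/2) = 1 := Real.sin_pi_div_two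
  have h3 : Real.cos (π/2) = 0 := Real.cos_pi_div_two
  simp [fex, Real.sin_pi, h2, h3]
  ring

lemma fex_small {p q a : ℝ} (hp : 0 ≤ p) (hq : 0 ≤ q) (h0 : 0 < a) (h1 : a ≤ 1) :
    fex p q a ≤ (p / 4 + q / 8) * π ^ 2 / 2 * a := by
  have hπ := Real.pi_gt_three
  have hs2 : a / π ≤ Real.sin (a / 2) := by
    simpa using Real.mul_le_sin (x := a / 2) (by positivity) (by linarith)
  have hspos : 0 < Real.sin (a / 2) := lt_of_lt_of_le (by positivity) hs2
  have hsin_le : Real.sin (a / 2) ≤ a / 2 := (Real.sin_lt (by positivity)).le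
  have hcos_ge : 1 - (a / 2) ^ 2 / 2 ≤ Real.cos (a / 2) := Real.one_sub_sq_div_two_le_cos
  have hcube : a - a ^ 3 / 4 < Real.sin a := by
    have := Real.sin_gt_sub_cube h0; have := pow_pos h0 3; linarith
  have htrig := trig1 (t := a / 2) (by positivity) (by linarith)
  have hnum : p * (a - Real.sin a) - q * (a * Real.cos (a / 2) - 2 * Real.sin (a / 2))
      ≤ (p / 4 + q / 8) * a ^ 3 := by
    have hq8 : q * (2 * Real.sin (a / 2) - a * Real.cos (a / 2)) ≤ q * (a ^ 3 / 8) := by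
      apply mul_le_mul_of_nonneg_left _ hq
      nlinarith
    nlinarith
  have hden : 2 * (a / π) ^ 2 ≤ 2 * Real.sin (a / 2) ^ 2 := by
    have h' : -(Real.sin (a/2)) ≤ a / π := by
      have h'' : (0:ℝ) < a / π := by positivity
      linarith
    have := sq_le_sq' h' hs2
    nlinarith
  have hstep : fex p q a ≤ ((p / 4 + q / 8) * a ^ 3) / (2 * (a / π) ^ 2) := by
    apply div_le_div₀ (by positivity) hnum (by positivity) hden
  calc fex p q a ≤ ((p / 4 + q / 8) * a ^ 3) / (2 * (a / π) ^ 2) := hstep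
    _ = (p / 4 + q / 8) * π ^ 2 / 2 * a := by
        field_simp

lemma fex_exists_sol {p q d : ℝ} (hp : 0 < p) (hq : 0 ≤ q) (hd : 0 < d)
    (hle : d ≤ fex p q π) : ∃ δ ∈ Ioc 0 π, fex p q δ = d := by
  rcases eq_or_lt_of_le hle with he | hlt
  · exact ⟨π, ⟨Real.pi_pos, le_refl _⟩, he.symm⟩
  · set C := (p / 4 + q / 8) * π ^ 2 / 2 with hC
    have hCpos : 0 < C + 1 := by positivity
    set a := min 1 (d / (C + 1)) with ha
    have ha0 : 0 < a := lt_min one_pos (by positivity)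
    have ha1 : a ≤ 1 := min_le_left _ _
    have haπ : a ≤ π := le_trans ha1 (by linarith [Real.pi_gt_three])
    have hfa : fex p q a < d := by
      have h1 : fex p q a ≤ C * a := fex_small hp.le hq ha0 ha1
      have h2 : a ≤ d / (C + 1) := min_le_right _ _
      have h3 : C * a ≤ C * (d / (C + 1)) :=
        mul_le_mul_of_nonneg_left h2 (by positivity)
      have h4 : C * (d / (C + 1)) < d := by
        rw [mul_div_assoc']
        rw [div_lt_iff₀ hCpos]
        nlinarith
      linarith
    have hcont : ContinuousOn (fex p q) (Icc a π) := by
      intro x hx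
      exact (fex_contAt (lt_of_lt_of_le ha0 hx.1)
        (lt_of_le_of_lt hx.2 (by linarith [Real.pi_pos]))).continuousWithinAt
    have := intermediate_value_Icc haπ hcont
    have hmem : d ∈ Icc (fex p q a) (fex p q π) := ⟨hfa.le, hle⟩
    obtain ⟨δ, hδ, hfd⟩ := this hmem
    exact ⟨δ, ⟨lt_of_lt_of_le ha0 hδ.1, hδ.2⟩, hfd⟩

noncomputable def wfun (d p q δ : ℝ) : ℝ :=
  d * δ + δ * (p * Real.cos (δ / 2) - q) / Real.sin (δ / 2)

lemma wfun_hasDeriv {d p q δ : ℝ} (hs : Real.sin (δ / 2) ≠ 0) :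
    HasDerivAt (wfun d p q) (d - fex p q δ) δ := by
  have hhalf : HasDerivAt (fun x : ℝ => x / 2) (1/2) δ := (hasDerivAt_id δ).div_const 2
  have hsin : HasDerivAt (fun x : ℝ => Real.sin (x/2)) (Real.cos (δ/2) * (1/2)) δ :=
    (Real.hasDerivAt_sin (δ/2)).comp (h := fun x : ℝ => x / 2) δ hhalf
  have hcos : HasDerivAt (fun x : ℝ => Real.cos (x/2)) (-Real.sin (δ/2) * (1/2)) δ :=
    (Real.hasDerivAt_cos (δ/2)).comp (h := fun x : ℝ => x / 2) δ hhalf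
  have hnum : HasDerivAt (fun x : ℝ => x * (p * Real.cos (x/2) - q))
      ((p * Real.cos (δ/2) - q) + δ * (p * (-Real.sin (δ/2) * (1/2)))) δ := by
    simpa using (hasDerivAt_id δ).fun_mul ((hcos.const_mul p).sub_const q)
  have hψ : HasDerivAt (fun x : ℝ => x * (p * Real.cos (x/2) - q) / Real.sin (x/2))
      ((((p * Real.cos (δ/2) - q) + δ * (p * (-Real.sin (δ/2) * (1/2)))) * Real.sin (δ/2)
        - δ * (p * Real.cos (δ/2) - q) * (Real.cos (δ/2) * (1/2))) / Real.sin (δ/2) ^ 2) δ :=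
    hnum.div hsin hs
  have hd : HasDerivAt (fun x : ℝ => d * x) d δ := by
    simpa using (hasDerivAt_id δ).const_mul d
  have := hd.fun_add hψ
  convert this using 1
  · rfl
  · rfl
  · rfl
  have hsδ : Real.sin δ = 2 * Real.sin (δ/2) * Real.cos (δ/2) := by
    rw [← Real.sin_two_mul, mul_div_cancel₀]; norm_num
  rw [fex, hsδ]
  field_simp
  linear_combination (p*δ) * Real.sin_sq_add_cos_sq (δ/2)

lemma wfun_crit {d p q δ : ℝ} (hs : Real.sin (δ / 2) ≠ 0) (hδ : δ ≠ 0)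
    (hcrit : fex p q δ = d) :
    wfun d p q δ = δ^2 * (p - q * Real.cos (δ/2)) / (2 * Real.sin (δ/2)^2) := by
  have hsδ : Real.sin δ = 2 * Real.sin (δ/2) * Real.cos (δ/2) := by
    rw [← Real.sin_two_mul, mul_div_cancel₀]; norm_num
  rw [wfun, ← hcrit, fex, hsδ]
  field_simp
  ring

lemma wfun_pi {d p q : ℝ} : wfun d p q π = d * π - q * π := by
  have h2 : Real.sin (π/2) = 1 := Real.sin_pi_div_two
  have h3 : Real.cos (π/2) = 0 := Real.cos_pi_div_two
  simp [wfun, h2, h3]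
  ring

lemma key_identity {x0 x1 y0 y1 δ γ : ℝ} (hs : Real.sin (δ / 2) ≠ 0)
    (hc : Real.cos (δ / 2) ≠ 0) (hδ : δ ≠ 0) :
    wfun (x1 - x0) (y1^2 + y0^2) (2 * (y1 * y0)) δ
      - ((x1 * δ + y1 * γ)
        - ((4 * δ ^ 2 * y0 ^ 2 + γ ^ 2) * Real.sin (δ / 2) + 4 * x0 * δ ^ 2 * Real.cos (δ / 2) +
            4 * y0 * γ * δ) / (4 * δ * Real.cos (δ / 2)))
      = (Real.sin (δ/2) * γ - 2 * δ * (y1 * Real.cos (δ/2) - y0))^2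
          / (4 * δ * Real.sin (δ/2) * Real.cos (δ/2)) := by
  rw [wfun]
  field_simp
  linear_combination (4*δ^2*y0^2) * Real.sin_sq_add_cos_sq (δ/2)

lemma sin_half_ne {δ : ℝ} (h0 : 0 < δ) (h2 : δ < 2 * π) : Real.sin (δ / 2) ≠ 0 :=
  (sin_half_pos h0 h2).ne'

lemma wfun_mono {d p q dst a b : ℝ} (hp : 0 < p) (hq : 0 ≤ q)
    (hdst : dst ∈ Ioc 0 π) (hcrit : fex p q dst = d)
    (ha : 0 < a) (hab : a ≤ b) (hb : b ≤ dst) :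
    wfun d p q a ≤ wfun d p q b := by
  rcases eq_or_lt_of_le hab with rfl | hab
  · exact le_refl _
  have hπ := Real.pi_pos
  have hcont : ContinuousOn (wfun d p q) (Icc a b) := by
    intro x hx
    have hx0 : 0 < x := lt_of_lt_of_le ha hx.1
    have hx2 : x < 2 * π := by
      have := hx.2.trans (hb.trans hdst.2); linarith
    exact (wfun_hasDeriv (sin_half_ne hx0 hx2)).continuousAt.continuousWithinAt
  have := strictMonoOn_of_deriv_pos (convex_Icc a b) hcont (fun x hx => by
    rw [interior_Icc] at hx
    have hx0 : 0 < x := lt_trans ha hx.1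
    have hx2 : x < 2 * π := by
      have := hx.2.trans_le (hb.trans hdst.2); linarith
    rw [(wfun_hasDeriv (sin_half_ne hx0 hx2)).deriv]
    have hlt : fex p q x < fex p q dst :=
      (fex_mono hp hq) ⟨hx0, hx2⟩ ⟨hdst.1, by linarith [hdst.2]⟩ (hx.2.trans_le hb)
    rw [hcrit] at hlt
    linarith)
  exact (this (left_mem_Icc.2 hab.le) (right_mem_Icc.2 hab.le) hab).le

lemma wfun_anti {d p q dst a b : ℝ} (hp : 0 < p) (hq : 0 ≤ q)
    (hdst : dst ∈ Ioc 0 π) (hcrit : fex p q dst = d)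
    (ha : dst ≤ a) (hab : a ≤ b) (hb : b ≤ π) :
    wfun d p q b ≤ wfun d p q a := by
  rcases eq_or_lt_of_le hab with rfl | hab
  · exact le_refl _
  have hπ := Real.pi_pos
  have ha0 : 0 < a := lt_of_lt_of_le hdst.1 ha
  have hcont : ContinuousOn (wfun d p q) (Icc a b) := by
    intro x hx
    have hx0 : 0 < x := lt_of_lt_of_le ha0 hx.1
    have hx2 : x < 2 * π := by have := hx.2.trans hb; linarith
    exact (wfun_hasDeriv (sin_half_ne hx0 hx2)).continuousAt.continuousWithinAt
  have := strictAntiOn_of_deriv_neg (convex_Icc a b) hcont (fun x hx => by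
    rw [interior_Icc] at hx
    have hx0 : 0 < x := lt_trans ha0 hx.1
    have hx2 : x < 2 * π := by have := hx.2.trans_le hb; linarith
    rw [(wfun_hasDeriv (sin_half_ne hx0 hx2)).deriv]
    have hlt : fex p q dst < fex p q x :=
      (fex_mono hp hq) ⟨hdst.1, by linarith [hdst.2]⟩ ⟨hx0, hx2⟩ (lt_of_le_of_lt ha hx.1)
    rw [hcrit] at hlt
    linarith)
  exact (this (left_mem_Icc.2 hab.le) (right_mem_Icc.2 hab.le) hab).le

lemma fdelta_eq {y0 y1 : ℝ} (hy0 : 0 ≤ y0) (hy1 : 0 ≤ y1) {δ : ℝ} (hδ : δ ≠ 0) :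
    fdelta δ (y0 ^ 2) (y1 ^ 2) = fex (y1 ^ 2 + y0 ^ 2) (2 * (y1 * y0)) δ := by
  rw [fdelta, if_neg hδ, fex, show y1 ^ 2 * y0 ^ 2 = (y1 * y0) ^ 2 by ring,
    Real.sqrt_sq (mul_nonneg hy1 hy0)]

lemma fdelta_odd (δ v0 v1 : ℝ) : fdelta (-δ) v0 v1 = - fdelta δ v0 v1 := by
  by_cases hδ : δ = 0
  · simp [hδ, fdelta]
  · rw [fdelta, if_neg (neg_ne_zero.2 hδ), fdelta, if_neg hδ, show -δ/2 = -(δ/2) by ring]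
    simp only [Real.sin_neg, Real.cos_neg]
    ring

lemma main_pos (x0 x1 y0 y1 : ℝ)
    (hy0 : 0 ≤ y0) (hy1 : 0 ≤ y1) (hy : ¬(y0 = 0 ∧ y1 = 0)) (hd : 0 < x1 - x0)
    (hclose : |x1 - x0| ≤ 1 / 2 * (Real.pi * (y1 ^ 2 + y0 ^ 2) + 4 * y1 * y0)) :
    ∃ δ ∈ Set.Ioo (-(2 * Real.pi)) (2 * Real.pi), fdelta δ (y0 ^ 2) (y1 ^ 2) = x1 - x0 ∧
      (∀ δ' ∈ Set.Ioo (-(2 * Real.pi)) (2 * Real.pi),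
        fdelta δ' (y0 ^ 2) (y1 ^ 2) = x1 - x0 → δ' = δ) ∧
      -Real.pi ≤ δ ∧ δ ≤ Real.pi ∧ δ ≠ 0 ∧
      LamStar x0 y0 x1 y1 =
        ((δ ^ 2 * (y1 ^ 2 + y0 ^ 2 - 2 * y1 * y0 * Real.cos (δ / 2)) /
          (2 * Real.sin (δ / 2) ^ 2) : ℝ) : EReal) := by
  have hπ := Real.pi_pos
  set d := x1 - x0 with hdd
  set p := y1 ^ 2 + y0 ^ 2 with hpd
  set q := 2 * (y1 * y0) with hqd
  have hp : 0 < p := by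
    rcases not_and_or.1 hy with h | h
    · have : 0 < y0 := lt_of_le_of_ne hy0 (Ne.symm h)
      positivity
    · have : 0 < y1 := lt_of_le_of_ne hy1 (Ne.symm h)
      positivity
  have hq : 0 ≤ q := by positivity
  have hqp : q ≤ p := by nlinarith [sq_nonneg (y1 - y0)]
  have hdle : d ≤ fex p q π := by
    rw [fex_pi]
    have := le_abs_self d
    rw [hpd, hqd]
    linarith
  obtain ⟨dst, hdst, hcrit⟩ := fex_exists_sol hp hq hd hdle
  have hdst2 : dst < 2 * π := by linarith [hdst.2]
  have hdne : dst ≠ 0 := hdst.1.ne'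
  have hs : Real.sin (dst / 2) ≠ 0 := sin_half_ne hdst.1 hdst2
  have hspos : 0 < Real.sin (dst / 2) := sin_half_pos hdst.1 hdst2
  set M := dst ^ 2 * (y1 ^ 2 + y0 ^ 2 - 2 * y1 * y0 * Real.cos (dst / 2)) /
      (2 * Real.sin (dst / 2) ^ 2) with hMd
  have hwM : wfun d p q dst = M := by
    rw [wfun_crit hs hdne hcrit, hMd, hpd, hqd]
    ring
  -- w is ≤ M on (0, π]
  have wleM : ∀ u, 0 < u → u ≤ π → wfun d p q u ≤ M := by
    intro u hu0 huπ
    rcases le_or_gt u dst with h | h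
    · exact (wfun_mono hp hq hdst hcrit hu0 h (le_refl _)).trans_eq hwM
    · exact (wfun_anti hp hq hdst hcrit (le_refl _) h.le huπ).trans_eq hwM
  -- 2(p - q) ≤ M
  have h2pq : 2 * (p - q) ≤ M := by
    have hsle : Real.sin (dst / 2) ≤ dst / 2 := (Real.sin_lt (by linarith [hdst.1])).le
    have hc1 : Real.cos (dst / 2) ≤ 1 := Real.cos_le_one _
    rw [hMd, le_div_iff₀ (by positivity)]
    have hsq : Real.sin (dst / 2) ^ 2 ≤ (dst / 2) ^ 2 := by nlinarith
    have hcq : q * Real.cos (dst / 2) ≤ q := by nlinarith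
    rw [show (2:ℝ) * y1 * y0 = q by rw [hqd]; ring, show y1 ^ 2 + y0 ^ 2 = p from hpd.symm]
    nlinarith [mul_nonneg (sub_nonneg.2 hqp) (sub_nonneg.2 hsq),
      mul_nonneg (sub_nonneg.2 hcq) (sq_nonneg dst)]
  -- upper bound
  have hub : LamStar x0 y0 x1 y1 ≤ ((M : ℝ) : EReal) := by
    rw [LamStar]
    apply iSup_le
    rintro ⟨δ, γ⟩
    by_cases h1 : |δ| < π
    · have habs := abs_lt.1 h1
      by_cases h2 : δ = 0
      · subst h2
        rw [Lam, if_pos h1, if_pos rfl, ← EReal.coe_sub]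
        apply EReal.coe_le_coe_iff.2
        have hsq := sq_nonneg (γ - 4 * (y1 - y0))
        rw [hpd, hqd] at h2pq
        nlinarith
      · rw [Lam, if_pos h1, if_neg h2, ← EReal.coe_sub]
        apply EReal.coe_le_coe_iff.2
        have hs2 : Real.sin (δ / 2) ≠ 0 := by
          intro h
          rw [Real.sin_eq_zero_iff_of_lt_of_lt (by linarith) (by linarith)] at h
          exact h2 (by linarith)
        have hc2 : 0 < Real.cos (δ / 2) :=
          Real.cos_pos_of_mem_Ioo ⟨by linarith, by linarith⟩
        have hkey := key_identity (x0 := x0) (x1 := x1) (y0 := y0) (y1 := y1)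
          (δ := δ) (γ := γ) hs2 hc2.ne' h2
        have hden : 0 < 4 * δ * Real.sin (δ / 2) * Real.cos (δ / 2) := by
          rcases lt_or_gt_of_ne h2 with hneg | hpos
          · have hsneg : Real.sin (δ / 2) < 0 := by
              apply Real.sin_neg_of_neg_of_neg_pi_lt (by linarith) (by linarith)
            have : 0 < 4 * δ * Real.sin (δ / 2) := by nlinarith
            positivity
          · have hspos2 : 0 < Real.sin (δ / 2) :=
              Real.sin_pos_of_pos_of_lt_pi (by linarith) (by linarith)
            positivity
        have hge : 0 ≤ (Real.sin (δ/2) * γ - 2 * δ * (y1 * Real.cos (δ/2) - y0)) ^ 2 /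
            (4 * δ * Real.sin (δ/2) * Real.cos (δ/2)) := div_nonneg (sq_nonneg _) hden.le
        have hwu : x1 * δ + y1 * γ -
            ((4 * δ ^ 2 * y0 ^ 2 + γ ^ 2) * Real.sin (δ / 2) + 4 * x0 * δ ^ 2 * Real.cos (δ / 2) +
              4 * y0 * γ * δ) / (4 * δ * Real.cos (δ / 2)) ≤ wfun d p q δ := by
          rw [hdd, hpd, hqd]
          linarith [hkey, hge]
        rcases lt_or_gt_of_ne h2 with hneg | hpos
        · have hwneg : wfun d p q δ ≤ wfun d p q (-δ) := by
            have hrw : wfun d p q (-δ) = -(d * δ) + δ * (p * Real.cos (δ/2) - q) / Real.sin (δ/2) := by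
              rw [wfun, show -δ/2 = -(δ/2) by ring, Real.sin_neg, Real.cos_neg, div_neg]
              ring
            rw [wfun, hrw]
            have : 0 < d := hd
            nlinarith
          have := wleM (-δ) (by linarith) (by linarith)
          linarith
        · have := wleM δ hpos (by linarith)
          linarith
    · rw [Lam, if_neg h1, EReal.sub_top]
      exact bot_le
  -- attainment on (0, π)
  have hattain : ∀ u, 0 < u → u < π → ((wfun d p q u : ℝ) : EReal) ≤ LamStar x0 y0 x1 y1 := by
    intro u hu0 huπ
    have hs2 : Real.sin (u / 2) ≠ 0 := sin_half_ne hu0 (by linarith)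
    have hc2 : 0 < Real.cos (u / 2) :=
      Real.cos_pos_of_mem_Ioo ⟨by linarith, by linarith⟩
    set γu := 2 * u * (y1 * Real.cos (u/2) - y0) / Real.sin (u/2) with hγu
    have hkey := key_identity (x0 := x0) (x1 := x1) (y0 := y0) (y1 := y1)
      (δ := u) (γ := γu) hs2 hc2.ne' hu0.ne'
    have hzero : Real.sin (u/2) * γu - 2 * u * (y1 * Real.cos (u/2) - y0) = 0 := by
      rw [hγu]
      field_simp
      ring
    rw [hzero] at hkey
    norm_num at hkey
    have heq : wfun d p q u = x1 * u + y1 * γu -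
        ((4 * u ^ 2 * y0 ^ 2 + γu ^ 2) * Real.sin (u / 2) + 4 * x0 * u ^ 2 * Real.cos (u / 2) +
          4 * y0 * γu * u) / (4 * u * Real.cos (u / 2)) := by
      rw [hdd, hpd, hqd]
      linarith [hkey]
    have hterm := le_iSup (fun pr : ℝ × ℝ =>
      ((x1 * pr.1 + y1 * pr.2 : ℝ) : EReal) - Lam x0 y0 pr.1 pr.2) ((u, γu) : ℝ × ℝ)
    rw [LamStar]
    have h1 : |u| < π := by rw [abs_of_pos hu0]; exact huπ
    rw [Lam, if_pos h1, if_neg hu0.ne', ← EReal.coe_sub] at hterm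
    rw [heq]
    exact hterm
  -- lower bound
  have hlb : ((M : ℝ) : EReal) ≤ LamStar x0 y0 x1 y1 := by
    rcases lt_or_eq_of_le hdst.2 with hlt | heqπ
    · rw [← hwM]
      exact hattain dst hdst.1 hlt
    · -- dst = π
      have hdpi : d = p * π / 2 + q := by rw [← hcrit, heqπ, fex_pi]
      have hMpi : M = wfun d p q π := by
        rw [wfun_pi, hMd, heqπ, hdpi]
        simp [Real.sin_pi_div_two, Real.cos_pi_div_two]
        ring
      rw [hMpi]
      have hcont : ContinuousAt (wfun d p q) π := by
        have hsin : ContinuousAt (fun x : ℝ => Real.sin (x / 2)) π :=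
          (Real.continuous_sin.comp (continuous_id.div_const 2)).continuousAt
        have hcos : ContinuousAt (fun x : ℝ => Real.cos (x / 2)) π :=
          (Real.continuous_cos.comp (continuous_id.div_const 2)).continuousAt
        have hne : Real.sin (π / 2) ≠ 0 := by
          rw [Real.sin_pi_div_two]; norm_num
        exact (continuousAt_id.const_mul d).add
          (((continuousAt_id.mul ((hcos.const_mul p).sub continuousAt_const)).div hsin hne))
      have hNB : (𝓝[Ioo (0:ℝ) π] π).NeBot := by
        rw [nhdsWithin_Ioo_eq_nhdsLT hπ]
        infer_instance
      have hT : Filter.Tendsto (fun u => ((wfun d p q u : ℝ) : EReal)) (𝓝[Ioo (0:ℝ) π] π)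
          (𝓝 ((wfun d p q π : ℝ) : EReal)) :=
        (continuous_coe_real_ereal.continuousAt.tendsto.comp
          (hcont.continuousWithinAt.tendsto))
      apply le_of_tendsto hT
      filter_upwards [eventually_mem_nhdsWithin] with u hu
      exact hattain u hu.1 hu.2
  refine ⟨dst, ⟨by linarith [hdst.1], by linarith [hdst.2]⟩, ?_, ?_, by linarith [hdst.1],
    hdst.2, hdne, le_antisymm hub hlb⟩
  · rw [fdelta_eq hy0 hy1 hdne, ← hpd, ← hqd, hcrit]
  · intro δ' hδ' hsol
    rcases lt_trichotomy δ' 0 with hneg | hzero | hpos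
    · exfalso
      have hodd : fdelta δ' (y0 ^ 2) (y1 ^ 2) = - fdelta (-δ') (y0 ^ 2) (y1 ^ 2) := by
        rw [← fdelta_odd, neg_neg]
      rw [hodd, fdelta_eq hy0 hy1 (by linarith), ← hpd, ← hqd] at hsol
      have hpos2 : 0 < fex p q (-δ') := fex_pos hp hq (by linarith) (by linarith [hδ'.1])
      rw [hdd] at hsol
      linarith
    · exfalso
      rw [hzero] at hsol
      rw [fdelta, if_pos rfl] at hsol
      rw [hdd] at hsol
      linarith
    · have h1 : fex p q δ' = d := by
        rw [← fdelta_eq hy0 hy1 hpos.ne', ← hpd, ← hqd] at *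
        exact hsol
      exact (fex_mono hp hq).injOn ⟨hpos, hδ'.2⟩ ⟨hdst.1, hdst2⟩ (h1.trans hcrit.symm)

lemma Lam_neg (x0 y0 δ γ : ℝ) : Lam (-x0) y0 (-δ) γ = Lam x0 y0 δ γ := by
  rw [Lam, Lam, abs_neg]
  by_cases h1 : |δ| < Real.pi
  · rw [if_pos h1, if_pos h1]
    by_cases h2 : δ = 0
    · simp [h2]
    · rw [if_neg h2, if_neg (neg_ne_zero.2 h2)]
      have habs := abs_lt.1 h1
      have hπ := Real.pi_pos
      have hc : Real.cos (δ / 2) ≠ 0 :=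
        (Real.cos_pos_of_mem_Ioo ⟨by linarith, by linarith⟩).ne'
      norm_cast
      rw [show -δ/2 = -(δ/2) by ring, Real.sin_neg, Real.cos_neg]
      rw [div_eq_div_iff (mul_ne_zero (mul_ne_zero (by norm_num) (neg_ne_zero.2 h2)) hc)
        (mul_ne_zero (mul_ne_zero (by norm_num) h2) hc)]
      ring
  · rw [if_neg h1, if_neg h1]

lemma LamStar_neg (x0 y0 x1 y1 : ℝ) : LamStar x0 y0 x1 y1 = LamStar (-x0) y0 (-x1) y1 := by
  rw [LamStar, LamStar]
  apply le_antisymm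
  · apply iSup_le
    rintro ⟨δ, γ⟩
    apply le_iSup_of_le ((-δ, γ) : ℝ × ℝ)
    have h1 : Lam (-x0) y0 (-δ) γ = Lam x0 y0 δ γ := Lam_neg x0 y0 δ γ
    simp only [h1]
    have : (-x1) * (-δ) + y1 * γ = x1 * δ + y1 * γ := by ring
    rw [this]
  · apply iSup_le
    rintro ⟨δ, γ⟩
    apply le_iSup_of_le ((-δ, γ) : ℝ × ℝ)
    have h1 : Lam (-x0) y0 δ γ = Lam x0 y0 (-δ) γ := by
      have := Lam_neg x0 y0 (-δ) γ
      rw [neg_neg] at this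
      exact this
    simp only [h1]
    have : (-x1) * δ + y1 * γ = x1 * (-δ) + y1 * γ := by ring
    rw [this]


/-- Theorem: in the close δ-regime, the unique solution `δ* ∈ (−2π, 2π)` of
`f(δ, y₀², y₁²) = x₁ − x₀` lies in `[−π, π] \{0}`, and
`Λ*(x₀,y₀,x₁,y₁) = (δ*)²·(y₁² + y₀² − 2y₁y₀·cos(δ*/2)) / (2·sin²(δ*/2))`. -/
theorem legendre_transform_close_regime (x0 x1 y0 y1 : ℝ) (hx : x0 ≠ x1)
    (hy0 : 0 ≤ y0) (hy1 : 0 ≤ y1) (hy : ¬(y0 = 0 ∧ y1 = 0))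
    (hclose : |x1 - x0| ≤ 1 / 2 * (Real.pi * (y1 ^ 2 + y0 ^ 2) + 4 * y1 * y0)) :
    ∃ δ ∈ Set.Ioo (-(2 * Real.pi)) (2 * Real.pi), fdelta δ (y0 ^ 2) (y1 ^ 2) = x1 - x0 ∧
      (∀ δ' ∈ Set.Ioo (-(2 * Real.pi)) (2 * Real.pi),
        fdelta δ' (y0 ^ 2) (y1 ^ 2) = x1 - x0 → δ' = δ) ∧
      -Real.pi ≤ δ ∧ δ ≤ Real.pi ∧ δ ≠ 0 ∧
      LamStar x0 y0 x1 y1 =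
        ((δ ^ 2 * (y1 ^ 2 + y0 ^ 2 - 2 * y1 * y0 * Real.cos (δ / 2)) /
          (2 * Real.sin (δ / 2) ^ 2) : ℝ) : EReal) := by
  rcases lt_or_gt_of_ne hx with hlt | hgt
  · exact main_pos x0 x1 y0 y1 hy0 hy1 hy (by linarith) hclose
  · obtain ⟨δ, hmem, hsol, huniq, hl, hr, hne, hLam⟩ :=
      main_pos (-x0) (-x1) y0 y1 hy0 hy1 hy (by linarith)
        (by rw [show -x1 - -x0 = -(x1 - x0) by ring, abs_neg]; exact hclose)
    refine ⟨-δ, ⟨by linarith [hmem.2], by linarith [hmem.1]⟩, ?_, ?_, by linarith, by linarith,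
      neg_ne_zero.2 hne, ?_⟩
    · rw [fdelta_odd, hsol]; ring
    · intro δ' hδ' hs'
      have h2 : fdelta (-δ') (y0 ^ 2) (y1 ^ 2) = -x1 - -x0 := by
        rw [fdelta_odd, hs']; ring
      have := huniq (-δ') ⟨by linarith [hδ'.2], by linarith [hδ'.1]⟩ h2
      linarith
    · rw [LamStar_neg x0 y0 x1 y1, hLam]
      congr 1
      rw [show -δ/2 = -(δ/2) by ring, Real.cos_neg, Real.sin_neg]
      ring
end

section
/- Let 0 ≤ v₀ < v₁. Then the function C ↦ F(v₀, v₁, C) is strictly increasing on the interval [0, v₁^(−1/2)) and convex on the interval (0, v₁^(−1/2)). -/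
/-- The function `F̄(v, C) = arcsin(C√v)/C² − √v·√(1 − C²v)/C`. -/
noncomputable def Fbar (v C : ℝ) : ℝ :=
  Real.arcsin (C * Real.sqrt v) / C ^ 2 - Real.sqrt v * Real.sqrt (1 - C ^ 2 * v) / C

/-- `F(v₀, v₁, C) = F̄(v₁, C) − F̄(v₀, C)`; note that `F(v₀, v₁, 0) = 0`. -/
noncomputable def F (v0 v1 C : ℝ) : ℝ := Fbar v1 C - Fbar v0 C


open Real Set

noncomputable def psi (x : ℝ) : ℝ := Real.arcsin x - x * Real.sqrt (1 - x ^ 2)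
noncomputable def gg (x : ℝ) : ℝ := x / Real.sqrt (1 - x ^ 2) - Real.arcsin x
noncomputable def HH (x : ℝ) : ℝ :=
  x ^ 3 / (Real.sqrt (1 - x ^ 2)) ^ 3 - 3 * x / Real.sqrt (1 - x ^ 2) + 3 * Real.arcsin x

lemma u_pos {x : ℝ} (h1 : -1 < x) (h2 : x < 1) : 0 < Real.sqrt (1 - x ^ 2) := by
  apply Real.sqrt_pos.2; nlinarith

lemma u_sq {x : ℝ} (h1 : -1 < x) (h2 : x < 1) : (Real.sqrt (1 - x ^ 2)) ^ 2 = 1 - x ^ 2 :=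
  Real.sq_sqrt (by nlinarith)

lemma hasDerivAt_u {x : ℝ} (h1 : -1 < x) (h2 : x < 1) :
    HasDerivAt (fun y : ℝ => Real.sqrt (1 - y ^ 2)) (-x / Real.sqrt (1 - x ^ 2)) x := by
  have h : HasDerivAt (fun y : ℝ => 1 - y ^ 2) (-(2 * x)) x := by
    simpa using ((hasDerivAt_pow 2 x).const_sub 1)
  have := h.sqrt (by nlinarith [u_pos h1 h2, u_sq h1 h2] : (1 : ℝ) - x ^ 2 ≠ 0)
  convert this using 1
  have := u_pos h1 h2
  field_simp

lemma hasDerivAt_psi {x : ℝ} (h1 : -1 < x) (h2 : x < 1) :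
    HasDerivAt psi (2 * x ^ 2 / Real.sqrt (1 - x ^ 2)) x := by
  have ha := Real.hasDerivAt_arcsin (by linarith) (by linarith)
  have hm : HasDerivAt (fun y : ℝ => y * Real.sqrt (1 - y ^ 2))
      (1 * Real.sqrt (1 - x ^ 2) + x * (-x / Real.sqrt (1 - x ^ 2))) x :=
    (hasDerivAt_id x).mul (hasDerivAt_u h1 h2)
  have := ha.fun_sub hm
  refine this.congr_deriv (Eq.symm ?_)
  have hu := u_pos h1 h2
  have hu2 := u_sq h1 h2
  field_simp
  nlinarith [hu2]

lemma hasDerivAt_gg {x : ℝ} (h1 : -1 < x) (h2 : x < 1) :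
    HasDerivAt gg (x ^ 2 / (Real.sqrt (1 - x ^ 2)) ^ 3) x := by
  have ha := Real.hasDerivAt_arcsin (by linarith) (by linarith)
  have hu := u_pos h1 h2
  have hu2 := u_sq h1 h2
  have hd : HasDerivAt (fun y : ℝ => y / Real.sqrt (1 - y ^ 2))
      ((1 * Real.sqrt (1 - x ^ 2) - x * (-x / Real.sqrt (1 - x ^ 2))) /
        (Real.sqrt (1 - x ^ 2)) ^ 2) x :=
    (hasDerivAt_id x).div (hasDerivAt_u h1 h2) (ne_of_gt hu)
  have := hd.fun_sub ha
  refine this.congr_deriv (Eq.symm ?_)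
  field_simp
  nlinarith [hu2, sq_nonneg x]

lemma hasDerivAt_HH {x : ℝ} (h1 : -1 < x) (h2 : x < 1) :
    HasDerivAt HH (3 * x ^ 4 / (Real.sqrt (1 - x ^ 2)) ^ 5) x := by
  have ha := Real.hasDerivAt_arcsin (by linarith) (by linarith)
  have hu := u_pos h1 h2
  have hu2 := u_sq h1 h2
  have h3 : HasDerivAt (fun y : ℝ => (Real.sqrt (1 - y ^ 2)) ^ 3)
      (3 * (Real.sqrt (1 - x ^ 2)) ^ 2 * (-x / Real.sqrt (1 - x ^ 2))) x := by
    simpa using (hasDerivAt_u h1 h2).fun_pow 3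
  have hd1 : HasDerivAt (fun y : ℝ => y ^ 3 / (Real.sqrt (1 - y ^ 2)) ^ 3)
      ((3 * x ^ 2 * (Real.sqrt (1 - x ^ 2)) ^ 3 -
        x ^ 3 * (3 * (Real.sqrt (1 - x ^ 2)) ^ 2 * (-x / Real.sqrt (1 - x ^ 2)))) /
        ((Real.sqrt (1 - x ^ 2)) ^ 3) ^ 2) x := by
    have := (hasDerivAt_pow 3 x).fun_div h3 (by positivity)
    exact this.congr_deriv (by norm_num)
  have hd2 : HasDerivAt (fun y : ℝ => 3 * y / Real.sqrt (1 - y ^ 2))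
      ((3 * Real.sqrt (1 - x ^ 2) - 3 * x * (-x / Real.sqrt (1 - x ^ 2))) /
        (Real.sqrt (1 - x ^ 2)) ^ 2) x := by
    have := ((hasDerivAt_id x).const_mul (3 : ℝ)).fun_div (hasDerivAt_u h1 h2) (ne_of_gt hu)
    simpa using this
  have := (hd1.fun_sub hd2).fun_add (ha.const_mul 3)
  refine this.congr_deriv (Eq.symm ?_)
  field_simp
  nlinarith [hu2, sq_nonneg x, sq_nonneg (x*x)]

lemma Ico_subset : Ico (0:ℝ) 1 ⊆ Ioo (-1:ℝ) 1 := fun x hx => ⟨by linarith [hx.1], hx.2⟩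

lemma psi_strictMonoOn : StrictMonoOn psi (Ico (0:ℝ) 1) := by
  apply strictMonoOn_of_deriv_pos (convex_Ico 0 1)
  · intro x hx
    exact (hasDerivAt_psi (by linarith [hx.1]) hx.2).continuousAt.continuousWithinAt
  · intro x hx
    rw [interior_Ico] at hx
    rw [(hasDerivAt_psi (by linarith [hx.1]) hx.2).deriv]
    exact div_pos (by nlinarith [hx.1]) (u_pos (by linarith [hx.1]) hx.2)

lemma gg_strictMonoOn : StrictMonoOn gg (Ico (0:ℝ) 1) := by
  apply strictMonoOn_of_deriv_pos (convex_Ico 0 1)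
  · intro x hx
    exact (hasDerivAt_gg (by linarith [hx.1]) hx.2).continuousAt.continuousWithinAt
  · intro x hx
    rw [interior_Ico] at hx
    rw [(hasDerivAt_gg (by linarith [hx.1]) hx.2).deriv]
    exact div_pos (by nlinarith [hx.1]) (pow_pos (u_pos (by linarith [hx.1]) hx.2) 3)

lemma HH_monotoneOn : MonotoneOn HH (Ico (0:ℝ) 1) := by
  apply monotoneOn_of_deriv_nonneg (convex_Ico 0 1)
  · intro x hx
    exact (hasDerivAt_HH (by linarith [hx.1]) hx.2).continuousAt.continuousWithinAt
  · intro x hx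
    rw [interior_Ico] at hx
    exact (hasDerivAt_HH (by linarith [hx.1]) hx.2).differentiableAt.differentiableWithinAt
  · intro x hx
    rw [interior_Ico] at hx
    rw [(hasDerivAt_HH (by linarith [hx.1]) hx.2).deriv]
    positivity

lemma Fbar_eq {v C : ℝ} (hv : 0 ≤ v) (hC : C ≠ 0) :
    Fbar v C = psi (C * Real.sqrt v) / C ^ 2 := by
  unfold Fbar psi
  rw [mul_pow, Real.sq_sqrt hv]
  field_simp

lemma hasDerivAt_A {s C : ℝ} (hs : 0 ≤ s) (hC : 0 < C) (hx : C * s < 1) :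
    HasDerivAt (fun C : ℝ => psi (C * s) / C ^ 2) (2 * gg (C * s) / C ^ 3) C := by
  have hx0 : (0:ℝ) ≤ C * s := by positivity
  have hx1 : (-1:ℝ) < C * s := by linarith
  have hu := u_pos hx1 hx
  have hu2 := u_sq hx1 hx
  have hinner : HasDerivAt (fun y : ℝ => y * s) s C := by
    simpa using (hasDerivAt_id C).mul_const s
  have hpsi : HasDerivAt (fun C : ℝ => psi (C * s))
      (2 * (C * s) ^ 2 / Real.sqrt (1 - (C * s) ^ 2) * s) C := by
    simpa [Function.comp_def] using (hasDerivAt_psi hx1 hx).comp C hinner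
  have hq := hpsi.fun_div (hasDerivAt_pow 2 C) (by positivity)
  refine hq.congr_deriv (Eq.symm ?_)
  unfold psi gg
  push_cast
  have hu' : Real.sqrt (1 - C ^ 2 * s ^ 2) ≠ 0 := by rw [← mul_pow]; exact hu.ne'
  field_simp
  ring_nf
  ring_nf at hu2
  linear_combination (-(C * s)) * hu2

lemma hasDerivAt_B {s C : ℝ} (hs : 0 ≤ s) (hC : 0 < C) (hx : C * s < 1) :
    HasDerivAt (fun C : ℝ => 2 * gg (C * s) / C ^ 3) (2 * HH (C * s) / C ^ 4) C := by
  have hx0 : (0:ℝ) ≤ C * s := by positivity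
  have hx1 : (-1:ℝ) < C * s := by linarith
  have hu := u_pos hx1 hx
  have hu2 := u_sq hx1 hx
  have hinner : HasDerivAt (fun y : ℝ => y * s) s C := by
    simpa using (hasDerivAt_id C).mul_const s
  have hgg : HasDerivAt (fun C : ℝ => gg (C * s))
      ((C * s) ^ 2 / (Real.sqrt (1 - (C * s) ^ 2)) ^ 3 * s) C := by
    simpa [Function.comp_def] using (hasDerivAt_gg hx1 hx).comp C hinner
  have hq := (hgg.const_mul 2).fun_div (hasDerivAt_pow 3 C) (by positivity)
  refine hq.congr_deriv (Eq.symm ?_)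
  unfold gg HH
  push_cast
  have hu' : Real.sqrt (1 - C ^ 2 * s ^ 2) ≠ 0 := by rw [← mul_pow]; exact hu.ne'
  field_simp
  ring

/-- Lemma: for `0 ≤ v₀ < v₁`, the function `C ↦ F(v₀, v₁, C)` is strictly increasing on
`[0, v₁^(-1/2))` and convex on `(0, v₁^(-1/2))`. -/
theorem F_strictMono_and_convex (v0 v1 : ℝ) (hv0 : 0 ≤ v0) (hv : v0 < v1) :
    StrictMonoOn (fun C => F v0 v1 C) (Set.Ico 0 (Real.sqrt v1)⁻¹) ∧
    ConvexOn ℝ (Set.Ioo 0 (Real.sqrt v1)⁻¹) (fun C => F v0 v1 C) := by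
  have hv1 : 0 < v1 := lt_of_le_of_lt hv0 hv
  set s0 := Real.sqrt v0 with hs0def
  set s1 := Real.sqrt v1 with hs1def
  have hs1 : 0 < s1 := Real.sqrt_pos.2 hv1
  have hs0 : 0 ≤ s0 := Real.sqrt_nonneg v0
  have hs01 : s0 < s1 := Real.sqrt_lt_sqrt hv0 hv
  set b := s1⁻¹ with hbdef
  have hb : 0 < b := inv_pos.2 hs1
  have hx1lt : ∀ C ∈ Ioo (0:ℝ) b, C * s1 < 1 := by
    intro C hC
    have := mul_lt_mul_of_pos_right hC.2 hs1
    rwa [inv_mul_cancel₀ (ne_of_gt hs1)] at this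
  have hx01 : ∀ C : ℝ, 0 < C → C * s0 < C * s1 := fun C hC =>
    mul_lt_mul_of_pos_left hs01 hC
  have hFeq : ∀ C : ℝ, C ≠ 0 → F v0 v1 C = psi (C * s1) / C ^ 2 - psi (C * s0) / C ^ 2 := by
    intro C hC
    rw [F, Fbar_eq (le_of_lt hv1) hC, Fbar_eq hv0 hC]
  set G : ℝ → ℝ := fun C => 2 * gg (C * s1) / C ^ 3 - 2 * gg (C * s0) / C ^ 3 with hGdef
  have hF' : ∀ C ∈ Ioo (0:ℝ) b, HasDerivAt (fun C => F v0 v1 C) (G C) C := by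
    intro C hC
    have h1 := hasDerivAt_A (le_of_lt hs1) hC.1 (hx1lt C hC)
    have h0 := hasDerivAt_A hs0 hC.1 (lt_trans (hx01 C hC.1) (hx1lt C hC))
    refine (h1.sub h0).congr_of_eventuallyEq ?_
    filter_upwards [eventually_ne_nhds (ne_of_gt hC.1)] with y hy
    exact hFeq y hy
  have hG' : ∀ C ∈ Ioo (0:ℝ) b,
      HasDerivAt G (2 * HH (C * s1) / C ^ 4 - 2 * HH (C * s0) / C ^ 4) C := by
    intro C hC
    exact (hasDerivAt_B (le_of_lt hs1) hC.1 (hx1lt C hC)).sub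
      (hasDerivAt_B hs0 hC.1 (lt_trans (hx01 C hC.1) (hx1lt C hC)))
  have hmemIco : ∀ C ∈ Ioo (0:ℝ) b, C * s0 ∈ Ico (0:ℝ) 1 ∧ C * s1 ∈ Ico (0:ℝ) 1 := by
    intro C hC
    have h1 := hx1lt C hC
    have h0 := hx01 C hC.1
    exact ⟨⟨mul_nonneg hC.1.le hs0, lt_trans h0 h1⟩, ⟨mul_nonneg hC.1.le hs1.le, h1⟩⟩
  have hGpos : ∀ C ∈ Ioo (0:ℝ) b, 0 < G C := by
    intro C hC
    obtain ⟨hm0, hm1⟩ := hmemIco C hC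
    have hgg := gg_strictMonoOn hm0 hm1 (hx01 C hC.1)
    have hC0 := hC.1
    simp only [hGdef]
    rw [div_sub_div_same]
    exact div_pos (by linarith) (by positivity)
  have hFpos : ∀ C ∈ Ioo (0:ℝ) b, 0 < F v0 v1 C := by
    intro C hC
    obtain ⟨hm0, hm1⟩ := hmemIco C hC
    have hpsi := psi_strictMonoOn hm0 hm1 (hx01 C hC.1)
    have hC0 := hC.1
    rw [hFeq C (ne_of_gt hC0), div_sub_div_same]
    exact div_pos (by linarith) (by positivity)
  have hF0 : F v0 v1 0 = 0 := by simp [F, Fbar]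
  have hmonoIoo : StrictMonoOn (fun C => F v0 v1 C) (Ioo 0 b) := by
    apply strictMonoOn_of_deriv_pos (convex_Ioo 0 b)
    · exact fun x hx => (hF' x hx).continuousAt.continuousWithinAt
    · intro x hx
      rw [interior_Ioo] at hx
      rw [(hF' x hx).deriv]
      exact hGpos x hx
  constructor
  · intro x hx y hy hxy
    rcases eq_or_lt_of_le hx.1 with h0 | h0
    · have hy' : y ∈ Ioo (0:ℝ) b := ⟨h0 ▸ hxy, hy.2⟩
      simp only
      rw [← h0, hF0]
      exact hFpos y hy'
    · exact hmonoIoo ⟨h0, hx.2⟩ ⟨lt_trans h0 hxy, hy.2⟩ hxy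
  · apply MonotoneOn.convexOn_of_deriv (convex_Ioo 0 b)
    · exact fun x hx => (hF' x hx).continuousAt.continuousWithinAt
    · rw [interior_Ioo]
      exact fun x hx => (hF' x hx).differentiableAt.differentiableWithinAt
    · rw [interior_Ioo]
      have hGmono : MonotoneOn G (Ioo 0 b) := by
        apply monotoneOn_of_deriv_nonneg (convex_Ioo 0 b)
        · exact fun x hx => (hG' x hx).continuousAt.continuousWithinAt
        · rw [interior_Ioo]
          exact fun x hx => (hG' x hx).differentiableAt.differentiableWithinAt
        · intro x hx
          rw [interior_Ioo] at hx
          rw [(hG' x hx).deriv]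
          obtain ⟨hm0, hm1⟩ := hmemIco x hx
          have hHH := HH_monotoneOn hm0 hm1 (hx01 x hx.1).le
          have hx0 := hx.1
          rw [div_sub_div_same]
          exact div_nonneg (by linarith) (by positivity)
      intro a ha c hc hac
      rw [(hF' a ha).deriv, (hF' c hc).deriv]
      exact hGmono ha hc hac
end

section
/- Let 0 ≤ v₀ < v₁. Then the function C ↦ F̃(v₀, v₁, C) is strictly decreasing on the interval (0, v₁^(−1/2)). Moreover, there exists ε > 0 such that F̃(v₀,v₁,·) is convex on (0, ε) and concave on (v₁^(−1/2) − ε, v₁^(−1/2)). -/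
open Real


noncomputable def Gfun (a C : ℝ) : ℝ :=
  a * Real.sqrt (1 - (C * a) ^ 2) / C + Real.arccos (C * a) / C ^ 2

noncomputable def Gfun' (a C : ℝ) : ℝ :=
  -(2 * a / (C ^ 2 * Real.sqrt (1 - (C * a) ^ 2)) + 2 * Real.arccos (C * a) / C ^ 3)

noncomputable def Gfun'' (a C : ℝ) : ℝ :=
  (6 * a - 8 * a ^ 3 * C ^ 2) / (C ^ 3 * Real.sqrt (1 - (C * a) ^ 2) ^ 3)
    + 6 * Real.arccos (C * a) / C ^ 4

lemma one_sub_sq_pos {a C : ℝ} (ha : 0 ≤ a) (hC : 0 < C) (hCa : C * a < 1) :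
    0 < 1 - (C * a) ^ 2 := by nlinarith [mul_nonneg hC.le ha]

lemma hasDerivAt_Gfun {a C : ℝ} (ha : 0 ≤ a) (hC : 0 < C) (hCa : C * a < 1) :
    HasDerivAt (Gfun a) (Gfun' a C) C := by
  have hu : 0 < 1 - (C * a) ^ 2 := one_sub_sq_pos ha hC hCa
  have hs : 0 < Real.sqrt (1 - (C * a) ^ 2) := Real.sqrt_pos.2 hu
  have hs2 : Real.sqrt (1 - (C * a) ^ 2) ^ 2 = 1 - (C * a) ^ 2 := Real.sq_sqrt hu.le
  have hmul : HasDerivAt (fun x : ℝ => x * a) a C := hasDerivAt_mul_const a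
  have hinner : HasDerivAt (fun x : ℝ => 1 - (x * a) ^ 2) (-(2 * (C * a) * a)) C := by
    have h := (hasDerivAt_const C (1:ℝ)).sub (hmul.pow 2)
    simp at h ⊢
    exact h
  have hsqrt : HasDerivAt (fun x : ℝ => Real.sqrt (1 - (x * a) ^ 2))
      (-(2 * (C * a) * a) / (2 * Real.sqrt (1 - (C * a) ^ 2))) C := hinner.sqrt hu.ne'
  have h1 : HasDerivAt (fun x : ℝ => a * Real.sqrt (1 - (x * a) ^ 2) / x)
      ((a * (-(2 * (C * a) * a) / (2 * Real.sqrt (1 - (C * a) ^ 2))) * C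
        - a * Real.sqrt (1 - (C * a) ^ 2) * 1) / C ^ 2) C :=
    (hsqrt.const_mul a).div (hasDerivAt_id C) hC.ne'
  have harc : HasDerivAt (fun x : ℝ => Real.arccos (x * a))
      (-(1 / Real.sqrt (1 - (C * a) ^ 2)) * a) C := by
    have h₁ : C * a ≠ -1 := by nlinarith [mul_nonneg hC.le ha]
    have h₂ : C * a ≠ 1 := ne_of_lt hCa
    exact (Real.hasDerivAt_arccos h₁ h₂).comp (h := fun x : ℝ => x * a) C hmul
  have h2 : HasDerivAt (fun x : ℝ => Real.arccos (x * a) / x ^ 2)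
      ((-(1 / Real.sqrt (1 - (C * a) ^ 2)) * a * C ^ 2
        - Real.arccos (C * a) * ((2 : ℕ) * C ^ 1)) / (C ^ 2) ^ 2) C :=
    harc.div (hasDerivAt_pow 2 C) (pow_ne_zero 2 hC.ne')
  have : HasDerivAt (Gfun a) _ C := h1.add h2
  convert this using 1
  rw [Gfun']
  have hs4 : Real.sqrt (1 - (C * a) ^ 2) ^ 4 = (1 - (C * a) ^ 2) ^ 2 := by
    rw [show (4:ℕ) = 2*2 by rfl, pow_mul, hs2]
  set s := Real.sqrt (1 - (C * a) ^ 2) with hsdef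
  have hsne : s ≠ 0 := hs.ne'
  field_simp
  linear_combination (a*C) * hs2

lemma hasDerivAt_Gfun' {a C : ℝ} (ha : 0 ≤ a) (hC : 0 < C) (hCa : C * a < 1) :
    HasDerivAt (Gfun' a) (Gfun'' a C) C := by
  have hu : 0 < 1 - (C * a) ^ 2 := one_sub_sq_pos ha hC hCa
  have hs : 0 < Real.sqrt (1 - (C * a) ^ 2) := Real.sqrt_pos.2 hu
  have hs2 : Real.sqrt (1 - (C * a) ^ 2) ^ 2 = 1 - (C * a) ^ 2 := Real.sq_sqrt hu.le
  have hs4 : Real.sqrt (1 - (C * a) ^ 2) ^ 4 = (1 - (C * a) ^ 2) ^ 2 := by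
    rw [show (4:ℕ) = 2*2 by rfl, pow_mul, hs2]
  have hs6 : Real.sqrt (1 - (C * a) ^ 2) ^ 6 = (1 - (C * a) ^ 2) ^ 3 := by
    rw [show (6:ℕ) = 2*3 by rfl, pow_mul, hs2]
  have hmul : HasDerivAt (fun x : ℝ => x * a) a C := hasDerivAt_mul_const a
  have hinner : HasDerivAt (fun x : ℝ => 1 - (x * a) ^ 2) (-(2 * (C * a) * a)) C := by
    have h := (hasDerivAt_const C (1:ℝ)).sub (hmul.pow 2)
    simp at h ⊢
    exact h
  have hsqrt : HasDerivAt (fun x : ℝ => Real.sqrt (1 - (x * a) ^ 2))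
      (-(2 * (C * a) * a) / (2 * Real.sqrt (1 - (C * a) ^ 2))) C := hinner.sqrt hu.ne'
  have harc : HasDerivAt (fun x : ℝ => Real.arccos (x * a))
      (-(1 / Real.sqrt (1 - (C * a) ^ 2)) * a) C := by
    have h₁ : C * a ≠ -1 := by nlinarith [mul_nonneg hC.le ha]
    have h₂ : C * a ≠ 1 := ne_of_lt hCa
    exact (Real.hasDerivAt_arccos h₁ h₂).comp (h := fun x : ℝ => x * a) C hmul
  have hd1 : HasDerivAt (fun x : ℝ => x ^ 2 * Real.sqrt (1 - (x * a) ^ 2))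
      ((2 : ℕ) * C ^ 1 * Real.sqrt (1 - (C * a) ^ 2)
        + C ^ 2 * (-(2 * (C * a) * a) / (2 * Real.sqrt (1 - (C * a) ^ 2)))) C :=
    (hasDerivAt_pow 2 C).mul hsqrt
  have hne : C ^ 2 * Real.sqrt (1 - (C * a) ^ 2) ≠ 0 := by positivity
  have hq1 : HasDerivAt (fun x : ℝ => 2 * a / (x ^ 2 * Real.sqrt (1 - (x * a) ^ 2)))
      ((0 * (C ^ 2 * Real.sqrt (1 - (C * a) ^ 2)) - 2 * a *
        ((2 : ℕ) * C ^ 1 * Real.sqrt (1 - (C * a) ^ 2)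
        + C ^ 2 * (-(2 * (C * a) * a) / (2 * Real.sqrt (1 - (C * a) ^ 2)))))
        / (C ^ 2 * Real.sqrt (1 - (C * a) ^ 2)) ^ 2) C :=
    (hasDerivAt_const C (2 * a)).div hd1 hne
  have hq2 : HasDerivAt (fun x : ℝ => 2 * Real.arccos (x * a) / x ^ 3)
      ((2 * (-(1 / Real.sqrt (1 - (C * a) ^ 2)) * a) * C ^ 3
        - 2 * Real.arccos (C * a) * ((3 : ℕ) * C ^ 2)) / (C ^ 3) ^ 2) C :=
    (harc.const_mul 2).div (hasDerivAt_pow 3 C) (pow_ne_zero 3 hC.ne')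
  have h : HasDerivAt (Gfun' a)
      (-(((0 * (C ^ 2 * Real.sqrt (1 - (C * a) ^ 2)) - 2 * a *
        ((2 : ℕ) * C ^ 1 * Real.sqrt (1 - (C * a) ^ 2)
        + C ^ 2 * (-(2 * (C * a) * a) / (2 * Real.sqrt (1 - (C * a) ^ 2)))))
        / (C ^ 2 * Real.sqrt (1 - (C * a) ^ 2)) ^ 2)
        + (2 * (-(1 / Real.sqrt (1 - (C * a) ^ 2)) * a) * C ^ 3
        - 2 * Real.arccos (C * a) * ((3 : ℕ) * C ^ 2)) / (C ^ 3) ^ 2)) C := (hq1.add hq2).neg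
  convert h using 1
  rw [Gfun'']
  set s := Real.sqrt (1 - (C * a) ^ 2) with hsdef
  have hsne : s ≠ 0 := hs.ne'
  field_simp
  linear_combination (-6*a*C) * hs2

lemma Gfun'_neg {a C : ℝ} (ha : 0 ≤ a) (hC : 0 < C) (hCa : C * a < 1) :
    Gfun' a C < 0 := by
  have hu : 0 < 1 - (C * a) ^ 2 := one_sub_sq_pos ha hC hCa
  have hs : 0 < Real.sqrt (1 - (C * a) ^ 2) := Real.sqrt_pos.2 hu
  have h1 : 0 ≤ 2 * a / (C ^ 2 * Real.sqrt (1 - (C * a) ^ 2)) := by positivity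
  have h2 : 0 < 2 * Real.arccos (C * a) / C ^ 3 := by
    have := Real.arccos_pos.2 hCa
    positivity
  rw [Gfun']
  linarith

lemma Gfun''_nonneg {a C : ℝ} (ha : 0 ≤ a) (hC : 0 < C) (hCa : C * a ≤ 1 / 2) :
    0 ≤ Gfun'' a C := by
  have hCa' : C * a < 1 := lt_of_le_of_lt hCa (by norm_num)
  have hu : 0 < 1 - (C * a) ^ 2 := one_sub_sq_pos ha hC hCa'
  have hs : 0 < Real.sqrt (1 - (C * a) ^ 2) := Real.sqrt_pos.2 hu
  have hnum : 0 ≤ 6 * a - 8 * a ^ 3 * C ^ 2 := by nlinarith [mul_nonneg hC.le ha, sq_nonneg (C * a)]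
  have harc : 0 ≤ Real.arccos (C * a) := Real.arccos_nonneg _
  have h1 : 0 ≤ (6 * a - 8 * a ^ 3 * C ^ 2) / (C ^ 3 * Real.sqrt (1 - (C * a) ^ 2) ^ 3) := by
    apply div_nonneg hnum; positivity
  have h2 : 0 ≤ 6 * Real.arccos (C * a) / C ^ 4 := by positivity
  rw [Gfun'']
  linarith

/-- The far-point function
`F̃(v₀,v₁,C) = √v₀·√(1−C²v₀)/C + arccos(C√v₀)/C² + √v₁·√(1−C²v₁)/C + arccos(C√v₁)/C²`. -/
noncomputable def Ftilde (v0 v1 C : ℝ) : ℝ :=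
  Real.sqrt v0 * Real.sqrt (1 - C ^ 2 * v0) / C + Real.arccos (C * Real.sqrt v0) / C ^ 2 +
  Real.sqrt v1 * Real.sqrt (1 - C ^ 2 * v1) / C + Real.arccos (C * Real.sqrt v1) / C ^ 2

set_option maxHeartbeats 2000000 in
/-- Lemma: for `0 ≤ v₀ < v₁`, the function `C ↦ F̃(v₀, v₁, C)` is strictly decreasing on
`(0, v₁^(-1/2))`; moreover it is convex near `0` and concave near `v₁^(-1/2)`. -/
theorem Ftilde_strictAnti_and_local_convexity (v0 v1 : ℝ) (hv0 : 0 ≤ v0) (hv : v0 < v1) :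
    StrictAntiOn (fun C => Ftilde v0 v1 C) (Set.Ioo 0 (Real.sqrt v1)⁻¹) ∧
    ∃ ε > 0, ConvexOn ℝ (Set.Ioo 0 ε) (fun C => Ftilde v0 v1 C) ∧
      ConcaveOn ℝ (Set.Ioo ((Real.sqrt v1)⁻¹ - ε) (Real.sqrt v1)⁻¹)
        (fun C => Ftilde v0 v1 C) := by
  have hv1 : 0 < v1 := lt_of_le_of_lt hv0 hv
  set a0 := Real.sqrt v0 with ha0def
  set a1 := Real.sqrt v1 with ha1def
  have ha0 : 0 ≤ a0 := Real.sqrt_nonneg v0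
  have ha1 : 0 < a1 := Real.sqrt_pos.2 hv1
  have ha01 : a0 < a1 := Real.sqrt_lt_sqrt hv0 hv
  have hsq0 : a0 ^ 2 = v0 := Real.sq_sqrt hv0
  have hsq1 : a1 ^ 2 = v1 := Real.sq_sqrt hv1.le
  clear_value a0 a1
  have hkey : (fun C => Ftilde v0 v1 C) = fun C => Gfun a0 C + Gfun a1 C := by
    funext C
    simp only [Ftilde, Gfun, mul_pow, ← ha0def, ← ha1def]
    rw [show C ^ 2 * v0 = C ^ 2 * a0 ^ 2 by rw [hsq0], show C ^ 2 * v1 = C ^ 2 * a1 ^ 2 by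
      rw [hsq1]]
    ring_nf
  rw [hkey]
  have hb : a1⁻¹ * a1 = 1 := inv_mul_cancel₀ ha1.ne'
  have hbpos : 0 < a1⁻¹ := by positivity
  have hmem : ∀ x : ℝ, x ∈ Set.Ioo (0:ℝ) a1⁻¹ → 0 < x ∧ x * a0 < 1 ∧ x * a1 < 1 := by
    intro x hx
    have hxa1 : x * a1 < 1 := by
      have := mul_lt_mul_of_pos_right hx.2 ha1
      linarith [hb ▸ this]
    have hxa0 : x * a0 < 1 := lt_of_le_of_lt
      (mul_le_mul_of_nonneg_left ha01.le hx.1.le) hxa1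
    exact ⟨hx.1, hxa0, hxa1⟩
  have hder : ∀ x : ℝ, x ∈ Set.Ioo (0:ℝ) a1⁻¹ →
      HasDerivAt (fun C => Gfun a0 C + Gfun a1 C) (Gfun' a0 x + Gfun' a1 x) x := by
    intro x hx
    obtain ⟨h1, h2, h3⟩ := hmem x hx
    exact (hasDerivAt_Gfun ha0 h1 h2).add (hasDerivAt_Gfun ha1.le h1 h3)
  have hderiv_eq : ∀ x ∈ Set.Ioo (0:ℝ) a1⁻¹,
      deriv (fun C => Gfun a0 C + Gfun a1 C) x = Gfun' a0 x + Gfun' a1 x :=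
    fun x hx => (hder x hx).deriv
  have hder2 : ∀ x ∈ Set.Ioo (0:ℝ) a1⁻¹,
      HasDerivAt (deriv (fun C => Gfun a0 C + Gfun a1 C)) (Gfun'' a0 x + Gfun'' a1 x) x := by
    intro x hx
    obtain ⟨h1, h2, h3⟩ := hmem x hx
    have h := (hasDerivAt_Gfun' ha0 h1 h2).add (hasDerivAt_Gfun' ha1.le h1 h3)
    apply h.congr_of_eventuallyEq
    filter_upwards [Ioo_mem_nhds hx.1 hx.2] with y hy
    exact hderiv_eq y hy
  constructor
  · apply strictAntiOn_of_deriv_neg (convex_Ioo _ _)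
    · intro x hx
      exact (hder x hx).differentiableAt.continuousAt.continuousWithinAt
    · rw [interior_Ioo]
      intro x hx
      rw [hderiv_eq x hx]
      obtain ⟨h1, h2, h3⟩ := hmem x hx
      linarith [Gfun'_neg ha0 h1 h2, Gfun'_neg ha1.le h1 h3]
  · set sbar := Real.sqrt (1 - v0 / v1) with hsbardef
    have hsbar : 0 < sbar := Real.sqrt_pos.2 (by rw [sub_pos, div_lt_one hv1]; exact hv)
    have hsbar1 : sbar ≤ 1 := by
      rw [hsbardef]; apply Real.sqrt_le_one.mpr; have : 0 ≤ v0 / v1 := by positivity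
      linarith
    clear_value sbar
    set K := 48 * a0 * a1 ^ 3 / sbar ^ 3 + 192 * Real.pi * a1 ^ 4 with hKdef
    have hK : 0 < K := by
      have h1 : 0 ≤ 48 * a0 * a1 ^ 3 / sbar ^ 3 := by positivity
      have h2 : 0 < 192 * Real.pi * a1 ^ 4 := by positivity
      rw [hKdef]; linarith
    clear_value K
    set ε := min (a1⁻¹ / 16) (a1 ^ 3 / (2 * K)) with hεdef
    have hεpos : 0 < ε := lt_min (by positivity) (by positivity)
    have hε1 : ε ≤ a1⁻¹ / 16 := min_le_left _ _
    have hε2 : ε ≤ a1 ^ 3 / (2 * K) := min_le_right _ _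
    have hε2' : ε * (2 * K) ≤ a1 ^ 3 := (le_div_iff₀ (by positivity)).1 hε2
    clear_value ε
    refine ⟨ε, hεpos, ?_, ?_⟩
    · -- convexity near 0
      have hsub : Set.Ioo (0:ℝ) ε ⊆ Set.Ioo 0 a1⁻¹ := fun x hx =>
        ⟨hx.1, lt_of_lt_of_le hx.2 (hε1.trans (by linarith))⟩
      apply convexOn_of_deriv2_nonneg (convex_Ioo _ _)
      · intro x hx
        exact (hder x (hsub hx)).differentiableAt.continuousAt.continuousWithinAt
      · rw [interior_Ioo]
        intro x hx
        exact (hder x (hsub hx)).differentiableAt.differentiableWithinAt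
      · rw [interior_Ioo]
        intro x hx
        exact (hder2 x (hsub hx)).differentiableAt.differentiableWithinAt
      · rw [interior_Ioo]
        intro x hx
        simp only [Function.iterate_succ, Function.iterate_zero, Function.comp_apply, id_eq]
        rw [(hder2 x (hsub hx)).deriv]
        have hxa1 : x * a1 ≤ 1 / 2 := by
          have hxε : x < a1⁻¹ / 16 := lt_of_lt_of_le hx.2 hε1
          nlinarith [hb, hx.1, ha1]
        have hxa0 : x * a0 ≤ 1 / 2 :=
          le_trans (mul_le_mul_of_nonneg_left ha01.le hx.1.le) hxa1
        exact add_nonneg (Gfun''_nonneg ha0 hx.1 hxa0) (Gfun''_nonneg ha1.le hx.1 hxa1)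
    · -- concavity near the right endpoint
      have hsub : Set.Ioo (a1⁻¹ - ε) a1⁻¹ ⊆ Set.Ioo (0:ℝ) a1⁻¹ := by
        intro x hx
        refine ⟨?_, hx.2⟩
        have := hx.1
        linarith [hε1, hbpos]
      apply concaveOn_of_deriv2_nonpos (convex_Ioo _ _)
      · intro x hx
        exact (hder x (hsub hx)).differentiableAt.continuousAt.continuousWithinAt
      · rw [interior_Ioo]
        intro x hx
        exact (hder x (hsub hx)).differentiableAt.differentiableWithinAt
      · rw [interior_Ioo]
        intro x hx
        exact (hder2 x (hsub hx)).differentiableAt.differentiableWithinAt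
      · rw [interior_Ioo]
        intro x hx
        simp only [Function.iterate_succ, Function.iterate_zero, Function.comp_apply, id_eq]
        rw [(hder2 x (hsub hx)).deriv]
        obtain ⟨hxpos, hxa0, hxa1⟩ := hmem x (hsub hx)
        -- basic bounds
        have hlow : 15 / 16 < x * a1 := by
          have h1 : a1⁻¹ - ε < x := hx.1
          have h2 : ε ≤ a1⁻¹ / 16 := hε1
          nlinarith [ha1, hb]
        have hhalf : (1:ℝ) ≤ 2 * (x * a1) := by linarith
        -- s1 facts
        have hu1 : 0 < 1 - (x * a1) ^ 2 := one_sub_sq_pos ha1.le hxpos hxa1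
        set s1 := Real.sqrt (1 - (x * a1) ^ 2) with hs1def
        have hs1pos : 0 < s1 := Real.sqrt_pos.2 hu1
        have hs1sq : s1 ^ 2 = 1 - (x * a1) ^ 2 := Real.sq_sqrt hu1.le
        clear_value s1
        have hs1le : s1 ≤ 1 := by
          rw [hs1def]; apply Real.sqrt_le_one.mpr
          nlinarith [mul_nonneg hxpos.le ha1.le]
        have hcube : s1 ^ 3 ≤ 1 - (x * a1) ^ 2 := by nlinarith [hs1pos, hs1le, hs1sq]
        have hu1small : 1 - (x * a1) ^ 2 ≤ 2 * a1 * ε := by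
          have h1 : 1 - x * a1 < ε * a1 := by
            have := hx.1
            nlinarith [ha1, hb]
          nlinarith [hxa1, mul_pos hεpos ha1]
        have hKs : K * s1 ^ 3 ≤ a1 ^ 4 := by
          have h1 : K * s1 ^ 3 ≤ K * (2 * a1 * ε) :=
            mul_le_mul_of_nonneg_left (hcube.trans hu1small) hK.le
          nlinarith [hε2', ha1]
        -- term bounds
        have hT1 : (6 * a1 - 8 * a1 ^ 3 * x ^ 2) / (x ^ 3 * s1 ^ 3) ≤ -K := by
          rw [div_le_iff₀ (by positivity)]
          have hnum : 6 * a1 - 8 * a1 ^ 3 * x ^ 2 ≤ -a1 := by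
            nlinarith [mul_nonneg ha1.le (sq_nonneg (x * a1 - 15 / 16)),
              mul_lt_mul_of_pos_left hlow ha1]
          have hx3 : x ^ 3 * a1 ^ 3 ≤ 1 := by
            have := pow_le_one₀ (mul_nonneg hxpos.le ha1.le) hxa1.le (n := 3)
            nlinarith [this]
          have hKx : K * (x ^ 3 * s1 ^ 3) ≤ a1 := by
            have h1 : K * s1 ^ 3 * x ^ 3 ≤ a1 ^ 4 * x ^ 3 :=
              mul_le_mul_of_nonneg_right hKs (by positivity)
            have h2 : a1 ^ 4 * x ^ 3 ≤ a1 := by nlinarith [hx3, ha1]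
            nlinarith [h1, h2]
          nlinarith [hnum, hKx]
        have hpow : (1:ℝ) / 16 ≤ (x * a1) ^ 4 := by
          have h1 : ((1:ℝ) / 2) ^ 4 ≤ (x * a1) ^ 4 :=
            pow_le_pow_left₀ (by norm_num) (by linarith) 4
          nlinarith [h1]
        have harc1 : 6 * Real.arccos (x * a1) / x ^ 4 ≤ 96 * Real.pi * a1 ^ 4 := by
          rw [div_le_iff₀ (by positivity)]
          nlinarith [Real.arccos_le_pi (x * a1), Real.arccos_nonneg (x * a1), Real.pi_pos,
            mul_le_mul_of_nonneg_left hpow Real.pi_pos.le]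
        have harc0 : 6 * Real.arccos (x * a0) / x ^ 4 ≤ 96 * Real.pi * a1 ^ 4 := by
          rw [div_le_iff₀ (by positivity)]
          nlinarith [Real.arccos_le_pi (x * a0), Real.arccos_nonneg (x * a0), Real.pi_pos,
            mul_le_mul_of_nonneg_left hpow Real.pi_pos.le]
        -- s0 facts
        have hu0 : 0 < 1 - (x * a0) ^ 2 := one_sub_sq_pos ha0 hxpos hxa0
        set s0 := Real.sqrt (1 - (x * a0) ^ 2) with hs0def
        have hs0pos : 0 < s0 := Real.sqrt_pos.2 hu0
        clear_value s0
        have hs0 : sbar ≤ s0 := by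
          rw [hsbardef, hs0def]
          apply Real.sqrt_le_sqrt
          have hxx : x ^ 2 * a1 ^ 2 ≤ 1 := by nlinarith [hxa1, mul_nonneg hxpos.le ha1.le]
          have : (x * a0) ^ 2 ≤ v0 / v1 := by
            rw [← hsq0, ← hsq1, le_div_iff₀ (by positivity : (0:ℝ) < a1 ^ 2)]
            nlinarith [mul_le_mul_of_nonneg_left hxx (sq_nonneg a0)]
          linarith
        have hT0 : (6 * a0 - 8 * a0 ^ 3 * x ^ 2) / (x ^ 3 * s0 ^ 3)
            ≤ 48 * a0 * a1 ^ 3 / sbar ^ 3 := by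
          rw [div_le_div_iff₀ (by positivity) (by positivity)]
          have h2 : (1:ℝ) ≤ 8 * (x * a1) ^ 3 := by
            have := pow_le_pow_left₀ (by norm_num : (0:ℝ) ≤ 1/2) (by linarith : (1:ℝ)/2 ≤ x * a1) 3
            nlinarith [this]
          have e1 : 48 * a0 * a1 ^ 3 * x ^ 3 * sbar ^ 3 ≤ 48 * a0 * a1 ^ 3 * x ^ 3 * s0 ^ 3 :=
            mul_le_mul_of_nonneg_left (pow_le_pow_left₀ hsbar.le hs0 3) (by positivity)
          have e2 : 6 * a0 * sbar ^ 3 ≤ 48 * a0 * a1 ^ 3 * x ^ 3 * sbar ^ 3 := by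
            calc 6 * a0 * sbar ^ 3 = 6 * a0 * sbar ^ 3 * 1 := by ring
              _ ≤ 6 * a0 * sbar ^ 3 * (8 * (x * a1) ^ 3) :=
                  mul_le_mul_of_nonneg_left h2 (by positivity)
              _ = 48 * a0 * a1 ^ 3 * x ^ 3 * sbar ^ 3 := by ring
          have e3 : (6 * a0 - 8 * a0 ^ 3 * x ^ 2) * sbar ^ 3 ≤ 6 * a0 * sbar ^ 3 := by
            have h3 : 0 ≤ 8 * a0 ^ 3 * x ^ 2 * sbar ^ 3 := by positivity
            linarith [h3]
          calc (6 * a0 - 8 * a0 ^ 3 * x ^ 2) * sbar ^ 3 ≤ 6 * a0 * sbar ^ 3 := e3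
            _ ≤ 48 * a0 * a1 ^ 3 * x ^ 3 * sbar ^ 3 := e2
            _ ≤ 48 * a0 * a1 ^ 3 * x ^ 3 * s0 ^ 3 := e1
            _ = 48 * a0 * a1 ^ 3 * (x ^ 3 * s0 ^ 3) := by ring
        rw [Gfun'', Gfun'', ← hs0def, ← hs1def]
        rw [hKdef] at hT1
        linarith [hT0, hT1, harc0, harc1]
end

section
/- Let v₀, v₁ ≥ 0 be not both zero. Then the function δ ↦ f(δ, v₀, v₁) is strictly increasing on [0, 2π), convex on the interval (0, 2π), and maps (0, 2π) onto (0, ∞). -/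
namespace FdeltaAux

open Real Set Topology Filter

noncomputable def pP (t : ℝ) : ℝ := (t - Real.sin t) / (1 - Real.cos t)
noncomputable def qQ (t : ℝ) : ℝ := (t + Real.sin t) / (1 + Real.cos t)
noncomputable def pP' (t : ℝ) : ℝ :=
  (2 * (1 - Real.cos t) - t * Real.sin t) / (1 - Real.cos t) ^ 2
noncomputable def qQ' (t : ℝ) : ℝ :=
  ((1 + Real.cos t) ^ 2 + Real.sin t * (t + Real.sin t)) / (1 + Real.cos t) ^ 2
noncomputable def pP'' (t : ℝ) : ℝ :=
  (t * (2 + Real.cos t) - 3 * Real.sin t) / (1 - Real.cos t) ^ 2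
noncomputable def qQ'' (t : ℝ) : ℝ :=
  (3 * Real.sin t + t * (2 - Real.cos t)) / (1 + Real.cos t) ^ 2

lemma one_sub_cos_pos {t : ℝ} (h0 : 0 < t) (hπ : t < π) : 0 < 1 - Real.cos t := by
  have hs : 0 < Real.sin (t / 2) :=
    Real.sin_pos_of_pos_of_lt_pi (by linarith) (by linarith [Real.pi_pos])
  have e : Real.cos t = 2 * Real.cos (t / 2) ^ 2 - 1 := by
    rw [show t = 2 * (t / 2) by ring, Real.cos_two_mul]; ring_nf
  have hp := Real.sin_sq_add_cos_sq (t / 2)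
  nlinarith [sq_nonneg (Real.sin (t / 2))]

lemma one_add_cos_pos {t : ℝ} (h0 : 0 < t) (hπ : t < π) : 0 < 1 + Real.cos t := by
  have hc : 0 < Real.cos (t / 2) :=
    Real.cos_pos_of_mem_Ioo ⟨by linarith [Real.pi_pos], by linarith⟩
  have e : Real.cos t = 2 * Real.cos (t / 2) ^ 2 - 1 := by
    rw [show t = 2 * (t / 2) by ring, Real.cos_two_mul]; ring_nf
  nlinarith

lemma core_ineq {t : ℝ} (h0 : 0 < t) (hπ : t < π) :
    0 ≤ 2 * (1 - Real.cos t) - t * Real.sin t := by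
  have hu0 : 0 < t / 2 := by linarith
  have hu2 : t / 2 < π / 2 := by linarith
  have hc : 0 < Real.cos (t / 2) :=
    Real.cos_pos_of_mem_Ioo ⟨by linarith [Real.pi_pos], hu2⟩
  have hs : 0 < Real.sin (t / 2) :=
    Real.sin_pos_of_pos_of_lt_pi hu0 (by linarith [Real.pi_pos])
  have htan : t / 2 < Real.tan (t / 2) := Real.lt_tan hu0 hu2
  rw [Real.tan_eq_sin_div_cos, lt_div_iff₀ hc] at htan
  have hsin : Real.sin t = 2 * Real.sin (t / 2) * Real.cos (t / 2) := by
    rw [show t = 2 * (t / 2) by ring, Real.sin_two_mul]; ring_nf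
  have hcos : 1 - Real.cos t = 2 * Real.sin (t / 2) ^ 2 := by
    have e : Real.cos t = 2 * Real.cos (t / 2) ^ 2 - 1 := by
      rw [show t = 2 * (t / 2) by ring, Real.cos_two_mul]; ring_nf
    have hp := Real.sin_sq_add_cos_sq (t / 2)
    linarith
  rw [hsin, hcos]
  nlinarith [mul_pos hs (sub_pos.mpr htan)]

lemma key2 {t : ℝ} (h0 : 0 ≤ t) (hπ : t ≤ π) :
    0 ≤ t * (2 + Real.cos t) - 3 * Real.sin t := by
  set G : ℝ → ℝ := fun x => x * (2 + Real.cos x) - 3 * Real.sin x with hG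
  have hd : ∀ x : ℝ, HasDerivAt G
      (1 * (2 + Real.cos x) + x * (0 + -Real.sin x) - 3 * Real.cos x) x := by
    intro x
    exact ((hasDerivAt_id x).mul ((hasDerivAt_const x 2).add (Real.hasDerivAt_cos x))).sub
      ((Real.hasDerivAt_sin x).const_mul 3)
  have mono : MonotoneOn G (Icc 0 π) := by
    apply monotoneOn_of_deriv_nonneg (convex_Icc 0 π)
    · exact (Continuous.continuousOn (by continuity))
    · intro x hx
      exact (hd x).differentiableAt.differentiableWithinAt
    · intro x hx
      rw [interior_Icc] at hx
      rw [(hd x).deriv]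
      have := core_ineq hx.1 hx.2
      linarith
  have h := mono (left_mem_Icc.mpr Real.pi_pos.le) ⟨h0, hπ⟩ h0
  simpa [hG] using h

lemma hasDerivAt_pP {t : ℝ} (h : 1 - Real.cos t ≠ 0) : HasDerivAt pP (pP' t) t := by
  have hd := ((hasDerivAt_id t).sub (Real.hasDerivAt_sin t)).div
    (((hasDerivAt_const t 1)).sub (Real.hasDerivAt_cos t)) h
  refine hd.congr_deriv (Eq.symm ?_)
  have hp := Real.sin_sq_add_cos_sq t
  simp only [Pi.sub_apply, id]
  unfold pP'
  field_simp
  linear_combination -hp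

lemma hasDerivAt_pP' {t : ℝ} (h : 1 - Real.cos t ≠ 0) : HasDerivAt pP' (pP'' t) t := by
  have hnum : HasDerivAt (fun x : ℝ => 2 * (1 - Real.cos x) - x * Real.sin x)
      (2 * (0 - -Real.sin t) - (1 * Real.sin t + t * Real.cos t)) t :=
    (((hasDerivAt_const t 1).sub (Real.hasDerivAt_cos t)).const_mul 2).sub
      ((hasDerivAt_id t).mul (Real.hasDerivAt_sin t))
  have hden : HasDerivAt (fun x : ℝ => (1 - Real.cos x) ^ 2)
      (2 * (1 - Real.cos t) ^ 1 * (0 - -Real.sin t)) t :=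
    ((hasDerivAt_const t 1).sub (Real.hasDerivAt_cos t)).pow 2
  have hd := hnum.div hden (pow_ne_zero 2 h)
  refine hd.congr_deriv (Eq.symm ?_)
  have hp := Real.sin_sq_add_cos_sq t
  unfold pP''
  field_simp
  linear_combination (-2*t) * hp

lemma hasDerivAt_qQ {t : ℝ} (h : 1 + Real.cos t ≠ 0) : HasDerivAt qQ (qQ' t) t := by
  have hd := ((hasDerivAt_id t).add (Real.hasDerivAt_sin t)).div
    (((hasDerivAt_const t 1)).add (Real.hasDerivAt_cos t)) h
  refine hd.congr_deriv (Eq.symm ?_)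
  have hp := Real.sin_sq_add_cos_sq t
  simp only [Pi.add_apply, id]
  unfold qQ'
  field_simp
  ring

lemma hasDerivAt_qQ' {t : ℝ} (h : 1 + Real.cos t ≠ 0) : HasDerivAt qQ' (qQ'' t) t := by
  have hnum : HasDerivAt (fun x : ℝ => (1 + Real.cos x) ^ 2 + Real.sin x * (x + Real.sin x))
      (2 * (1 + Real.cos t) ^ 1 * (0 + -Real.sin t) +
        (Real.cos t * (t + Real.sin t) + Real.sin t * (1 + Real.cos t))) t :=
    (((hasDerivAt_const t 1).add (Real.hasDerivAt_cos t)).pow 2).add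
      ((Real.hasDerivAt_sin t).mul ((hasDerivAt_id t).add (Real.hasDerivAt_sin t)))
  have hden : HasDerivAt (fun x : ℝ => (1 + Real.cos x) ^ 2)
      (2 * (1 + Real.cos t) ^ 1 * (0 + -Real.sin t)) t :=
    ((hasDerivAt_const t 1).add (Real.hasDerivAt_cos t)).pow 2
  have hd := hnum.div hden (pow_ne_zero 2 h)
  refine hd.congr_deriv (Eq.symm ?_)
  have hp := Real.sin_sq_add_cos_sq t
  unfold qQ''
  field_simp
  linear_combination (-2*(Real.sin t + t)) * hp

lemma decomp_alg (v0 v1 x a b s c : ℝ) (ha : a ^ 2 = v0) (hb : b ^ 2 = v1)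
    (hs : s ≠ 0) (h1 : 1 - c ≠ 0) (h2 : 1 + c ≠ 0) (hp : s ^ 2 + c ^ 2 = 1) :
    ((v1 + v0) * (2 * x - 2 * s * c) - 2 * (b * a) * (2 * x * c - 2 * s)) / (2 * s ^ 2) =
      (b - a) ^ 2 / 2 * ((x - s) / (1 - c)) + (b + a) ^ 2 / 2 * ((x + s) / (1 + c)) := by
  subst ha hb
  field_simp
  linear_combination (-2*((b^2+a^2)*(x - s*c) - 2*b*a*(x*c - s))) * hp

lemma fdelta_eq (v0 v1 : ℝ) (hv0 : 0 ≤ v0) (hv1 : 0 ≤ v1) {δ : ℝ} (h0 : 0 < δ)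
    (h2π : δ < 2 * π) :
    fdelta δ v0 v1 = (Real.sqrt v1 - Real.sqrt v0) ^ 2 / 2 * pP (δ / 2)
      + (Real.sqrt v1 + Real.sqrt v0) ^ 2 / 2 * qQ (δ / 2) := by
  have ht0 : 0 < δ / 2 := by linarith
  have htπ : δ / 2 < π := by linarith
  have hs : Real.sin (δ / 2) ≠ 0 := (Real.sin_pos_of_pos_of_lt_pi ht0 htπ).ne'
  have h1 : (1 : ℝ) - Real.cos (δ / 2) ≠ 0 := (one_sub_cos_pos ht0 htπ).ne'
  have h2c : (1 : ℝ) + Real.cos (δ / 2) ≠ 0 := (one_add_cos_pos ht0 htπ).ne'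
  have hsin : Real.sin δ = 2 * Real.sin (δ / 2) * Real.cos (δ / 2) := by
    rw [show δ = 2 * (δ / 2) by ring, Real.sin_two_mul]; ring_nf
  have hab : Real.sqrt (v1 * v0) = Real.sqrt v1 * Real.sqrt v0 := Real.sqrt_mul hv1 v0
  have key := decomp_alg v0 v1 (δ / 2) (Real.sqrt v0) (Real.sqrt v1) (Real.sin (δ / 2))
    (Real.cos (δ / 2)) (Real.sq_sqrt hv0) (Real.sq_sqrt hv1) hs h1 h2c
    (Real.sin_sq_add_cos_sq (δ / 2))
  calc fdelta δ v0 v1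
      = ((v1 + v0) * (2 * (δ / 2) - 2 * Real.sin (δ / 2) * Real.cos (δ / 2)) -
          2 * (Real.sqrt v1 * Real.sqrt v0) *
            (2 * (δ / 2) * Real.cos (δ / 2) - 2 * Real.sin (δ / 2))) /
          (2 * Real.sin (δ / 2) ^ 2) := by
        rw [fdelta, if_neg h0.ne', hsin, hab]; ring_nf
    _ = _ := by unfold pP qQ; exact key


lemma pP_le {t : ℝ} (h0 : 0 < t) (h1 : t ≤ 1) : pP t ≤ 2 * t := by
  have hπ := Real.pi_pos
  have htπ : t < π := by linarith [Real.pi_gt_three]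
  have hnum : t - Real.sin t ≤ t ^ 3 / 4 := by
    have := Real.sin_gt_sub_cube h0
    nlinarith [pow_pos h0 3]
  have hsin : Real.sin (t / 2) ≥ t / π := by
    have := Real.mul_le_sin (x := t / 2) (by linarith) (by linarith [Real.pi_gt_three])
    calc Real.sin (t / 2) ≥ 2 / π * (t / 2) := this
      _ = t / π := by field_simp
  have hcos : 1 - Real.cos t = 2 * Real.sin (t / 2) ^ 2 := by
    have e : Real.cos t = 2 * Real.cos (t / 2) ^ 2 - 1 := by
      rw [show t = 2 * (t / 2) by ring, Real.cos_two_mul]; ring_nf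
    have hp := Real.sin_sq_add_cos_sq (t / 2)
    linarith
  have hden : 2 * (t / π) ^ 2 ≤ 1 - Real.cos t := by
    rw [hcos]
    have h2 : 0 ≤ t / π := by positivity
    nlinarith
  have hdenpos : (0:ℝ) < 2 * (t / π) ^ 2 := by positivity
  have hstep : pP t ≤ (t ^ 3 / 4) / (2 * (t / π) ^ 2) := by
    unfold pP
    apply div_le_div₀ (by positivity) hnum hdenpos hden
  refine hstep.trans ?_
  have ht' : t ≠ 0 := h0.ne'
  have hπ' : π ≠ 0 := hπ.ne'
  have h44 : t ^ 3 / 4 / (2 * (t / π) ^ 2) = π ^ 2 * t / 8 := by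
    field_simp
    ring
  rw [h44]
  have hπ4 := Real.pi_le_four
  have h16 : π ^ 2 ≤ 16 := by nlinarith
  nlinarith

lemma qQ_le {t : ℝ} (h0 : 0 < t) (h1 : t ≤ 1) : qQ t ≤ 2 * t := by
  have hc : 0 ≤ Real.cos t :=
    Real.cos_nonneg_of_mem_Icc ⟨by linarith [Real.pi_pos], by linarith [Real.pi_gt_three]⟩
  have hs : Real.sin t < t := Real.sin_lt h0
  have hs0 : 0 ≤ t + Real.sin t := by
    have : -t < Real.sin t := by
      have := Real.neg_one_le_sin t
      nlinarith [Real.sin_pos_of_pos_of_lt_pi h0 (by linarith [Real.pi_gt_three])]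
    linarith
  calc qQ t ≤ t + Real.sin t := div_le_self hs0 (by linarith)
    _ ≤ 2 * t := by linarith

noncomputable def gg' (cm cp δ : ℝ) : ℝ :=
  cm * (pP' (δ / 2) * (1 / 2)) + cp * (qQ' (δ / 2) * (1 / 2))

noncomputable def gg'' (cm cp δ : ℝ) : ℝ :=
  cm * (pP'' (δ / 2) * (1 / 2) * (1 / 2)) + cp * (qQ'' (δ / 2) * (1 / 2) * (1 / 2))

set_option maxHeartbeats 1000000 in
lemma master (cm cp : ℝ) (hcm : 0 ≤ cm) (hcp : 0 < cp) (F : ℝ → ℝ)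
    (hF0 : F 0 = 0)
    (hF : ∀ δ ∈ Ioo 0 (2 * π), F δ = cm * pP (δ / 2) + cp * qQ (δ / 2)) :
    StrictMonoOn F (Ico 0 (2 * π)) ∧ ConvexOn ℝ (Ioo 0 (2 * π)) F ∧
      F '' Ioo 0 (2 * π) = Ioi 0 := by
  have hπ := Real.pi_pos
  -- pointwise sign facts
  have hsinpos : ∀ {t : ℝ}, 0 < t → t < π → 0 < Real.sin t := fun h0 h1 =>
    Real.sin_pos_of_pos_of_lt_pi h0 h1
  have hPnn : ∀ {t : ℝ}, 0 < t → t < π → 0 ≤ pP t := fun h0 h1 =>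
    div_nonneg (by linarith [Real.sin_lt h0]) (one_sub_cos_pos h0 h1).le
  have hQpos : ∀ {t : ℝ}, 0 < t → t < π → 0 < qQ t := fun h0 h1 =>
    div_pos (by linarith [hsinpos h0 h1]) (one_add_cos_pos h0 h1)
  have hP'nn : ∀ {t : ℝ}, 0 < t → t < π → 0 ≤ pP' t := fun h0 h1 =>
    div_nonneg (core_ineq h0 h1) (sq_nonneg _)
  have hQ'pos : ∀ {t : ℝ}, 0 < t → t < π → 0 < qQ' t := by
    intro t h0 h1
    apply div_pos
    · have h1c := one_add_cos_pos h0 h1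
      have hs := hsinpos h0 h1
      nlinarith
    · exact pow_pos (one_add_cos_pos h0 h1) 2
  have hP''nn : ∀ {t : ℝ}, 0 < t → t < π → 0 ≤ pP'' t := fun h0 h1 =>
    div_nonneg (key2 h0.le h1.le) (sq_nonneg _)
  have hQ''nn : ∀ {t : ℝ}, 0 < t → t < π → 0 ≤ qQ'' t := by
    intro t h0 h1
    apply div_nonneg _ (sq_nonneg _)
    have hs := (hsinpos h0 h1).le
    have hc := Real.neg_one_le_cos t
    have hc' := Real.cos_le_one t
    nlinarith
  -- derivative data
  have hFd : ∀ δ ∈ Ioo 0 (2 * π), HasDerivAt F (gg' cm cp δ) δ := by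
    intro δ hδ
    have ht0 : 0 < δ / 2 := by linarith [hδ.1]
    have htπ : δ / 2 < π := by linarith [hδ.2]
    have hc1 : (1 : ℝ) - Real.cos (δ / 2) ≠ 0 := (one_sub_cos_pos ht0 htπ).ne'
    have hc2 : (1 : ℝ) + Real.cos (δ / 2) ≠ 0 := (one_add_cos_pos ht0 htπ).ne'
    have hP2 : HasDerivAt (fun x : ℝ => pP (x / 2)) (pP' (δ / 2) * (1 / 2)) δ :=
      (hasDerivAt_pP hc1).comp (h₂ := pP) δ ((hasDerivAt_id δ).div_const 2)
    have hQ2 : HasDerivAt (fun x : ℝ => qQ (x / 2)) (qQ' (δ / 2) * (1 / 2)) δ :=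
      (hasDerivAt_qQ hc2).comp (h₂ := qQ) δ ((hasDerivAt_id δ).div_const 2)
    have hg : HasDerivAt (fun x : ℝ => cm * pP (x / 2) + cp * qQ (x / 2)) (gg' cm cp δ) δ :=
      (hP2.const_mul cm).add (hQ2.const_mul cp)
    exact hg.congr_of_eventuallyEq <| by
      filter_upwards [isOpen_Ioo.mem_nhds hδ] with x hx using hF x hx
  have hg'd : ∀ δ ∈ Ioo 0 (2 * π), HasDerivAt (gg' cm cp) (gg'' cm cp δ) δ := by
    intro δ hδ
    have ht0 : 0 < δ / 2 := by linarith [hδ.1]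
    have htπ : δ / 2 < π := by linarith [hδ.2]
    have hc1 : (1 : ℝ) - Real.cos (δ / 2) ≠ 0 := (one_sub_cos_pos ht0 htπ).ne'
    have hc2 : (1 : ℝ) + Real.cos (δ / 2) ≠ 0 := (one_add_cos_pos ht0 htπ).ne'
    have hP2 : HasDerivAt (fun x : ℝ => pP' (x / 2)) (pP'' (δ / 2) * (1 / 2)) δ :=
      (hasDerivAt_pP' hc1).comp (h₂ := pP') δ ((hasDerivAt_id δ).div_const 2)
    have hQ2 : HasDerivAt (fun x : ℝ => qQ' (x / 2)) (qQ'' (δ / 2) * (1 / 2)) δ :=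
      (hasDerivAt_qQ' hc2).comp (h₂ := qQ') δ ((hasDerivAt_id δ).div_const 2)
    exact ((hP2.mul_const (1 / 2)).const_mul cm).add ((hQ2.mul_const (1 / 2)).const_mul cp)
  have hFpos : ∀ δ ∈ Ioo 0 (2 * π), 0 < F δ := by
    intro δ hδ
    have ht0 : 0 < δ / 2 := by linarith [hδ.1]
    have htπ : δ / 2 < π := by linarith [hδ.2]
    rw [hF δ hδ]
    have := mul_nonneg hcm (hPnn ht0 htπ)
    have := mul_pos hcp (hQpos ht0 htπ)
    linarith
  have hg'pos : ∀ δ ∈ Ioo 0 (2 * π), 0 < gg' cm cp δ := by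
    intro δ hδ
    have ht0 : 0 < δ / 2 := by linarith [hδ.1]
    have htπ : δ / 2 < π := by linarith [hδ.2]
    have h1 : 0 ≤ cm * (pP' (δ / 2) * (1 / 2)) := by
      have := hP'nn ht0 htπ; positivity
    have h2 : 0 < cp * (qQ' (δ / 2) * (1 / 2)) := by
      have := hQ'pos ht0 htπ; positivity
    unfold gg'; linarith
  have hg''nn : ∀ δ ∈ Ioo 0 (2 * π), 0 ≤ gg'' cm cp δ := by
    intro δ hδ
    have ht0 : 0 < δ / 2 := by linarith [hδ.1]
    have htπ : δ / 2 < π := by linarith [hδ.2]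
    have h1 := hP''nn ht0 htπ
    have h2 := hQ''nn ht0 htπ
    unfold gg''; positivity
  have hcont : ContinuousOn F (Ioo 0 (2 * π)) := fun x hx =>
    (hFd x hx).continuousAt.continuousWithinAt
  -- strict monotonicity on Ioo
  have mono : StrictMonoOn F (Ioo 0 (2 * π)) := by
    apply strictMonoOn_of_hasDerivWithinAt_pos (convex_Ioo _ _) hcont
      (f' := gg' cm cp)
    · simp only [interior_Ioo]
      exact fun x hx => (hFd x hx).hasDerivWithinAt
    · simp only [interior_Ioo]
      exact hg'pos
  refine ⟨?_, ?_, ?_⟩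
  · -- strict mono on Ico
    intro x hx y hy hxy
    rcases hx.1.eq_or_lt with h | h
    · have hy' : y ∈ Ioo 0 (2 * π) := ⟨h ▸ hxy, hy.2⟩
      have : F x = 0 := by rw [← h, hF0]
      rw [this]
      exact hFpos y hy'
    · exact mono ⟨h, hx.2⟩ ⟨h.trans hxy, hy.2⟩ hxy
  · -- convexity
    apply convexOn_of_hasDerivWithinAt2_nonneg (convex_Ioo _ _) hcont
      (f' := gg' cm cp) (f'' := gg'' cm cp)
    · simp only [interior_Ioo]
      exact fun x hx => (hFd x hx).hasDerivWithinAt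
    · simp only [interior_Ioo]
      exact fun x hx => (hg'd x hx).hasDerivWithinAt
    · simp only [interior_Ioo]
      exact hg''nn
  · -- image
    refine Set.Subset.antisymm ?_ ?_
    · rintro _ ⟨x, hx, rfl⟩
      exact hFpos x hx
    · intro y hy
      rw [mem_Ioi] at hy
      have hIoo : Ioo 0 (2 * π) ∈ 𝓝[<] (2 * π) :=
        Ioo_mem_nhdsLT_of_mem ⟨by linarith, le_refl _⟩
      -- F tends to +∞ at (2π)⁻
      have htop : Tendsto F (𝓝[<] (2 * π)) atTop := by
        have h1 : Tendsto (fun δ : ℝ => 1 + Real.cos (δ / 2)) (𝓝[<] (2 * π)) (𝓝[>] 0) := by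
          rw [tendsto_nhdsWithin_iff]
          constructor
          · have hco : Continuous fun δ : ℝ => 1 + Real.cos (δ / 2) := by continuity
            have ht : Tendsto (fun δ : ℝ => 1 + Real.cos (δ / 2)) (𝓝[<] (2 * π))
                (𝓝 (1 + Real.cos (2 * π / 2))) :=
              (hco.tendsto (2 * π)).mono_left nhdsWithin_le_nhds
            have : 1 + Real.cos (2 * π / 2) = 0 := by
              rw [show 2 * π / 2 = π by ring, Real.cos_pi]; ring
            rwa [this] at ht
          · filter_upwards [hIoo] with δ hδ
            exact one_add_cos_pos (by linarith [hδ.1]) (by linarith [hδ.2])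
        have h2 : Tendsto (fun δ : ℝ => (1 + Real.cos (δ / 2))⁻¹) (𝓝[<] (2 * π)) atTop :=
          h1.inv_tendsto_nhdsGT_zero
        have h3 : Tendsto (fun δ : ℝ => δ / 2 + Real.sin (δ / 2)) (𝓝[<] (2 * π)) (𝓝 π) := by
          have hco : Continuous fun δ : ℝ => δ / 2 + Real.sin (δ / 2) := by continuity
          have ht : Tendsto (fun δ : ℝ => δ / 2 + Real.sin (δ / 2)) (𝓝[<] (2 * π))
              (𝓝 (2 * π / 2 + Real.sin (2 * π / 2))) :=
            (hco.tendsto (2 * π)).mono_left nhdsWithin_le_nhds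
          have : 2 * π / 2 + Real.sin (2 * π / 2) = π := by
            rw [show 2 * π / 2 = π by ring, Real.sin_pi]; ring
          rwa [this] at ht
        have h4 := (h3.pos_mul_atTop Real.pi_pos h2).const_mul_atTop hcp
        refine tendsto_atTop_mono' _ ?_ h4
        filter_upwards [hIoo] with δ hδ
        have ht0 : 0 < δ / 2 := by linarith [hδ.1]
        have htπ : δ / 2 < π := by linarith [hδ.2]
        have hq : cp * ((δ / 2 + Real.sin (δ / 2)) * (1 + Real.cos (δ / 2))⁻¹)
            = cp * qQ (δ / 2) := by simp only [qQ, div_eq_mul_inv]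
        rw [hF δ hδ, hq]
        have := mul_nonneg hcm (hPnn ht0 htπ)
        linarith
      obtain ⟨b, hby, hb⟩ : ∃ b, y < F b ∧ b ∈ Ioo 0 (2 * π) :=
        ((htop.eventually_gt_atTop y).and hIoo).exists
      -- small point a
      set a : ℝ := min (b / 2) (min 1 (y / (cm + cp + 1))) with hadef
      have ha0 : 0 < a :=
        lt_min (by linarith [hb.1]) (lt_min one_pos (div_pos hy (by linarith)))
      have hab : a < b := lt_of_le_of_lt (min_le_left _ _) (by linarith [hb.1])
      have ha1 : a ≤ 1 := le_trans (min_le_right _ _) (min_le_left _ _)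
      have hay : a ≤ y / (cm + cp + 1) := le_trans (min_le_right _ _) (min_le_right _ _)
      have haI : a ∈ Ioo 0 (2 * π) := ⟨ha0, hab.trans hb.2⟩
      have hFa : F a < y := by
        rw [hF a haI]
        have hp := pP_le (t := a / 2) (by linarith) (by linarith)
        have hq := qQ_le (t := a / 2) (by linarith) (by linarith)
        have h1 : cm * pP (a / 2) ≤ cm * (2 * (a / 2)) :=
          mul_le_mul_of_nonneg_left hp hcm
        have h2 : cp * qQ (a / 2) ≤ cp * (2 * (a / 2)) :=
          mul_le_mul_of_nonneg_left hq hcp.le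
        have h3 : (cm + cp) * a ≤ (cm + cp) * (y / (cm + cp + 1)) :=
          mul_le_mul_of_nonneg_left hay (by linarith)
        have h4 : (cm + cp) * (y / (cm + cp + 1)) < y := by
          rw [mul_div_assoc', div_lt_iff₀ (by linarith)]
          nlinarith
        nlinarith
      have hsub : Icc a b ⊆ Ioo 0 (2 * π) := fun x hx =>
        ⟨lt_of_lt_of_le ha0 hx.1, lt_of_le_of_lt hx.2 hb.2⟩
      obtain ⟨c, hcab, hc⟩ :=
        intermediate_value_Icc hab.le (hcont.mono hsub) ⟨hFa.le, hby.le⟩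
      exact ⟨c, hsub hcab, hc⟩

end FdeltaAux

/-- Lemma: for `v₀, v₁ ≥ 0` not both zero, `δ ↦ f(δ, v₀, v₁)` is strictly increasing on
`[0, 2π)`, convex on `(0, 2π)`, and maps `(0, 2π)` onto `(0, ∞)`. -/
theorem fdelta_strictMono_convex_surj (v0 v1 : ℝ) (hv0 : 0 ≤ v0) (hv1 : 0 ≤ v1)
    (hv : ¬(v0 = 0 ∧ v1 = 0)) :
    StrictMonoOn (fun δ => fdelta δ v0 v1) (Set.Ico 0 (2 * Real.pi)) ∧
    ConvexOn ℝ (Set.Ioo 0 (2 * Real.pi)) (fun δ => fdelta δ v0 v1) ∧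
    (fun δ => fdelta δ v0 v1) '' Set.Ioo 0 (2 * Real.pi) = Set.Ioi 0 := by
  have hcm : 0 ≤ (Real.sqrt v1 - Real.sqrt v0) ^ 2 / 2 := by positivity
  have hcp : 0 < (Real.sqrt v1 + Real.sqrt v0) ^ 2 / 2 := by
    have h : 0 < Real.sqrt v1 + Real.sqrt v0 := by
      rcases not_and_or.mp hv with h | h
      · have h0 : 0 < v0 := lt_of_le_of_ne hv0 (Ne.symm h)
        have := Real.sqrt_pos.mpr h0
        have := Real.sqrt_nonneg v1
        linarith
      · have h1 : 0 < v1 := lt_of_le_of_ne hv1 (Ne.symm h)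
        have := Real.sqrt_pos.mpr h1
        have := Real.sqrt_nonneg v0
        linarith
    positivity
  exact FdeltaAux.master _ _ hcm hcp _ (by simp [fdelta])
    (fun δ hδ => FdeltaAux.fdelta_eq v0 v1 hv0 hv1 hδ.1 hδ.2)
end

section
/- Let x₀, x₁ ∈ ℝ and let v₀, v₁ ≥ 0 with max(v₀,v₁) > 0. If |x₁ − x₀| > (π/2)·(v₁ + v₀) + 2·√(v₁v₀) (i.e., the points (x₀,v₀) and (x₁,v₁) are δ-far), then |x₁ − x₀| > F(min(v₀,v₁), max(v₀,v₁), max(v₀,v₁)^(−1/2)) (i.e., the points are C-far). -/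
/-- Lemma: if the points `(x₀,v₀)` and `(x₁,v₁)` are δ-far, then they are C-far. -/
theorem delta_far_implies_C_far (x0 x1 v0 v1 : ℝ) (hv0 : 0 ≤ v0) (hv1 : 0 ≤ v1)
    (hmax : 0 < max v0 v1)
    (hdfar : Real.pi / 2 * (v1 + v0) + 2 * Real.sqrt (v1 * v0) < |x1 - x0|) :
    F (min v0 v1) (max v0 v1) ((Real.sqrt (max v0 v1))⁻¹) < |x1 - x0| := by
  set M := max v0 v1 with hM
  set m := min v0 v1 with hm
  have hMpos : 0 < M := hmax
  have hmnn : 0 ≤ m := le_min hv0 hv1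
  have hmle : m ≤ M := min_le_max
  have hsM : 0 < Real.sqrt M := Real.sqrt_pos.2 hMpos
  set C := (Real.sqrt M)⁻¹ with hC
  have hCpos : 0 < C := inv_pos.2 hsM
  have hC2 : C ^ 2 = M⁻¹ := by
    rw [hC, inv_pow, Real.sq_sqrt hMpos.le]
  have hCM : C * Real.sqrt M = 1 := inv_mul_cancel₀ hsM.ne'
  have hFbarM : Fbar M C = Real.pi / 2 * M := by
    unfold Fbar
    rw [hCM, Real.arcsin_one, hC2, inv_mul_cancel₀ hMpos.ne', sub_self,
      Real.sqrt_zero, mul_zero, zero_div, sub_zero, div_eq_mul_inv, inv_inv]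
  have harcsin : 0 ≤ Real.arcsin (C * Real.sqrt m) :=
    Real.arcsin_nonneg.2 (mul_nonneg hCpos.le (Real.sqrt_nonneg m))
  have hs1 : Real.sqrt (1 - C ^ 2 * m) ≤ 1 :=
    Real.sqrt_le_one.2 (sub_le_self _ (mul_nonneg (sq_nonneg C) hmnn))
  have hterm : Real.sqrt m * Real.sqrt (1 - C ^ 2 * m) / C ≤ Real.sqrt (m * M) := by
    rw [Real.sqrt_mul hmnn, div_eq_mul_inv, hC, inv_inv]
    nlinarith [mul_nonneg (Real.sqrt_nonneg m) hsM.le, Real.sqrt_nonneg (1 - C ^ 2 * m)]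
  have hFbarm : -Real.sqrt (m * M) ≤ Fbar m C := by
    unfold Fbar
    have h1 : 0 ≤ Real.arcsin (C * Real.sqrt m) / C ^ 2 :=
      div_nonneg harcsin (sq_nonneg C)
    linarith [hterm]
  have hsmM : Real.sqrt (v1 * v0) = Real.sqrt (m * M) := by
    rw [hm, hM, min_mul_max, mul_comm]
  have hF : F m M C ≤ Real.pi / 2 * M + Real.sqrt (m * M) := by
    unfold F
    rw [hFbarM]
    linarith
  have hadd : v1 + v0 = m + M := by
    rw [hm, hM]; rcases le_total v0 v1 with h | h <;> simp [min_eq_left, max_eq_right,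
      min_eq_right, max_eq_left, h] <;> ring
  have hsq : 0 ≤ Real.sqrt (m * M) := Real.sqrt_nonneg _
  have hpi : 0 < Real.pi := Real.pi_pos
  calc F m M C ≤ Real.pi / 2 * M + Real.sqrt (m * M) := hF
    _ ≤ Real.pi / 2 * (v1 + v0) + 2 * Real.sqrt (v1 * v0) := by
        rw [hadd, hsmM]; nlinarith
    _ < |x1 - x0| := hdfar
end

section
/- Let 0 ≤ v₀ ≤ v₁ with v₁ > 0, let x₀ < x₁, and suppose δ̂ ∈ (π, 2π) satisfies f(δ̂, v₀, v₁) = x₁ − x₀. Define C̃ = sin(δ̂/2) / √(v₁ + v₀ − 2√(v₁v₀)·cos(δ̂/2)). Then 0 < C̃ < v₁^(−1/2) and F̃(v₀, v₁, C̃) = x₁ − x₀; that is, C̃ solves the far-point C-equation. -/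
set_option maxHeartbeats 1000000


/-- Lemma: if `δ̂ ∈ (π, 2π)` solves the δ-equation `f(δ̂, v₀, v₁) = x₁ − x₀`, then
`C̃ = sin(δ̂/2)/√(v₁ + v₀ − 2√(v₁v₀)cos(δ̂/2))` satisfies `0 < C̃ < v₁^(-1/2)` and solves
the far-point C-equation `F̃(v₀, v₁, C̃) = x₁ − x₀`. -/
theorem delta_solution_gives_C_solution (x0 x1 v0 v1 δ : ℝ)
    (hv0 : 0 ≤ v0) (hv01 : v0 ≤ v1) (hv1 : 0 < v1) (hx : x0 < x1)
    (hδ : δ ∈ Set.Ioo Real.pi (2 * Real.pi)) (hsol : fdelta δ v0 v1 = x1 - x0) :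
    0 < Real.sin (δ / 2) / Real.sqrt (v1 + v0 - 2 * Real.sqrt (v1 * v0) * Real.cos (δ / 2)) ∧
    Real.sin (δ / 2) / Real.sqrt (v1 + v0 - 2 * Real.sqrt (v1 * v0) * Real.cos (δ / 2)) <
      (Real.sqrt v1)⁻¹ ∧
    Ftilde v0 v1
      (Real.sin (δ / 2) / Real.sqrt (v1 + v0 - 2 * Real.sqrt (v1 * v0) * Real.cos (δ / 2))) =
      x1 - x0 := by
  obtain ⟨hπδ, hδ2π⟩ := hδ
  have hπ := Real.pi_pos
  have hδpos : 0 < δ := lt_trans hπ hπδ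
  have h2a : Real.pi / 2 < δ / 2 := by linarith
  have h2b : δ / 2 < Real.pi := by linarith
  set a := Real.sqrt v0 with ha_def
  set b := Real.sqrt v1 with hb_def
  have ha0 : 0 ≤ a := Real.sqrt_nonneg v0
  have hb0 : 0 < b := Real.sqrt_pos.mpr hv1
  have ha2 : a ^ 2 = v0 := Real.sq_sqrt hv0
  have hb2 : b ^ 2 = v1 := Real.sq_sqrt hv1.le
  have hab : Real.sqrt (v1 * v0) = b * a := Real.sqrt_mul hv1.le v0
  set s := Real.sin (δ / 2) with hs_def
  set c := Real.cos (δ / 2) with hc_def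
  have hs : 0 < s := Real.sin_pos_of_pos_of_lt_pi (by linarith) h2b
  have hc : c < 0 := Real.cos_neg_of_pi_div_two_lt_of_lt h2a (by linarith)
  have hsc : s ^ 2 + c ^ 2 = 1 := Real.sin_sq_add_cos_sq (δ / 2)
  rw [hab]
  set D := v1 + v0 - 2 * (b * a) * c with hD_def
  have hD : 0 < D := by
    have h1 : (b * a) * c ≤ 0 := mul_nonpos_of_nonneg_of_nonpos (mul_nonneg hb0.le ha0) hc.le
    have h2 : 0 < b ^ 2 := pow_pos hb0 2
    rw [hD_def, ← ha2, ← hb2]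
    have h3 := sq_nonneg a
    linarith
  set R := Real.sqrt D with hR_def
  have hR : 0 < R := Real.sqrt_pos.mpr hD
  have hR2 : R ^ 2 = b ^ 2 + a ^ 2 - 2 * b * a * c := by
    rw [hR_def, Real.sq_sqrt hD.le, hD_def, ha2, hb2]; ring
  set C := s / R with hC_def
  have hC : 0 < C := div_pos hs hR
  have habc0 : 0 < b - a * c := by
    have h1 : a * c ≤ 0 := mul_nonpos_of_nonneg_of_nonpos ha0 hc.le
    linarith
  have habc1 : 0 < a - b * c := by
    have h1 : b * c < 0 := mul_neg_of_pos_of_neg hb0 hc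
    linarith
  have key0 : R ^ 2 - (s * a) ^ 2 = (b - a * c) ^ 2 := by
    linear_combination hR2 - a ^ 2 * hsc
  have key1 : R ^ 2 - (s * b) ^ 2 = (a - b * c) ^ 2 := by
    linear_combination hR2 - b ^ 2 * hsc
  have hsbR : s * b < R := by
    have h' : (s * b) ^ 2 < R ^ 2 := by
      have := pow_pos habc1 2
      linarith [key1]
    exact lt_of_pow_lt_pow_left₀ 2 hR.le h'
  refine ⟨hC, ?_, ?_⟩
  · rw [hC_def, div_lt_iff₀ hR, inv_mul_eq_div, lt_div_iff₀ hb0]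
    exact hsbR
  · -- the main equality
    have hCa0 : 0 ≤ C * a := mul_nonneg hC.le ha0
    have h1v0 : 1 - C ^ 2 * v0 = ((b - a * c) / R) ^ 2 := by
      rw [hC_def, ← ha2]
      field_simp
      linear_combination key0
    have h1v1 : 1 - C ^ 2 * v1 = ((a - b * c) / R) ^ 2 := by
      rw [hC_def, ← hb2]
      field_simp
      linear_combination key1
    have hCa2 : (C * a) ^ 2 ≤ 1 := by
      have h1 : (C * a) ^ 2 = C ^ 2 * v0 := by rw [← ha2]; ring
      have h2 := sq_nonneg ((b - a * c) / R)
      linarith [h1v0]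
    have hCa1 : C * a ≤ 1 := by
      have h3 := abs_le.mp ((sq_le_one_iff_abs_le_one _).mp hCa2)
      linarith [h3.2]
    have hCam1 : (-1 : ℝ) ≤ C * a := by linarith
    set θ := Real.arccos (C * a) with hθ_def
    have hcosθ : Real.cos θ = C * a := Real.cos_arccos hCam1 hCa1
    have hθ0 : 0 ≤ θ := Real.arccos_nonneg _
    have hθhalf : θ ≤ Real.pi / 2 := Real.arccos_le_pi_div_two.mpr hCa0
    have hsinθ : Real.sin θ = (b - a * c) / R := by
      rw [hθ_def, Real.sin_arccos]
      have : 1 - (C * a) ^ 2 = ((b - a * c) / R) ^ 2 := by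
        rw [show (C * a) ^ 2 = C ^ 2 * v0 by rw [← ha2]; ring]; exact h1v0
      rw [this, Real.sqrt_sq (div_nonneg habc0.le hR.le)]
    have harc : Real.arccos (C * b) = δ / 2 - θ := by
      have hcos2 : Real.cos (δ / 2 - θ) = C * b := by
        rw [Real.cos_sub, ← hc_def, ← hs_def, hcosθ, hsinθ, hC_def]
        field_simp
        ring
      rw [← hcos2, Real.arccos_cos (by linarith) (by linarith)]
    have hq0 : Real.sqrt (1 - C ^ 2 * v0) = (b - a * c) / R := by
      rw [h1v0, Real.sqrt_sq (div_nonneg habc0.le hR.le)]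
    have hq1 : Real.sqrt (1 - C ^ 2 * v1) = (a - b * c) / R := by
      rw [h1v1, Real.sqrt_sq (div_nonneg habc1.le hR.le)]
    have hsinδ : Real.sin δ = 2 * s * c := by
      rw [hs_def, hc_def, ← Real.sin_two_mul]
      congr 1
      ring
    rw [← hsol]
    simp only [fdelta, if_neg hδpos.ne', Ftilde, ← ha_def, ← hb_def, ← hs_def, ← hc_def,
      ← hθ_def, hab, hq0, hq1, harc, hsinδ]
    rw [hC_def, ← ha2, ← hb2]
    field_simp
    linear_combination δ * hR2
end

section
/- Let 0 ≤ v₀ ≤ v₁ with v₁ > 0, let x₀ < x₁, and suppose δ̂ ∈ (π, 2π) satisfies f(δ̂, v₀, v₁) = x₁ − x₀. Define C̃ = sin(δ̂/2) / √(v₁ + v₀ − 2√(v₁v₀)·cos(δ̂/2)). Then 2·(arccos(C̃·√v₀) + arccos(C̃·√v₁))/C̃ = δ̂·√(v₁ + v₀ − 2√(v₁v₀)·cos(δ̂/2)) / sin(δ̂/2); that is, the far-point C-formula and the δ-formula for the Heston distance agree. -/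
set_option maxHeartbeats 1000000 in
/-- Lemma: in the far δ-regime the far-point C-formula and the δ-formula for the Heston
distance agree: with `C̃ = sin(δ̂/2)/√(v₁ + v₀ − 2√(v₁v₀)cos(δ̂/2))`,
`2(arccos(C̃√v₀) + arccos(C̃√v₁))/C̃ = δ̂·√(v₁ + v₀ − 2√(v₁v₀)cos(δ̂/2))/sin(δ̂/2)`. -/
theorem C_formula_eq_delta_formula (x0 x1 v0 v1 δ : ℝ)
    (hv0 : 0 ≤ v0) (hv01 : v0 ≤ v1) (hv1 : 0 < v1) (hx : x0 < x1)
    (hδ : δ ∈ Set.Ioo Real.pi (2 * Real.pi)) (hsol : fdelta δ v0 v1 = x1 - x0) :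
    2 * (Real.arccos
          (Real.sin (δ / 2) /
            Real.sqrt (v1 + v0 - 2 * Real.sqrt (v1 * v0) * Real.cos (δ / 2)) *
            Real.sqrt v0) +
        Real.arccos
          (Real.sin (δ / 2) /
            Real.sqrt (v1 + v0 - 2 * Real.sqrt (v1 * v0) * Real.cos (δ / 2)) *
            Real.sqrt v1)) /
      (Real.sin (δ / 2) /
        Real.sqrt (v1 + v0 - 2 * Real.sqrt (v1 * v0) * Real.cos (δ / 2))) =
    δ * Real.sqrt (v1 + v0 - 2 * Real.sqrt (v1 * v0) * Real.cos (δ / 2)) /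
      Real.sin (δ / 2) := by
  obtain ⟨hδ1, hδ2⟩ := hδ
  clear hsol hx
  obtain ⟨u, hu0, rfl⟩ : ∃ u, 0 ≤ u ∧ v0 = u ^ 2 :=
    ⟨Real.sqrt v0, Real.sqrt_nonneg v0, (Real.sq_sqrt hv0).symm⟩
  obtain ⟨w, hw0, rfl⟩ : ∃ w, 0 ≤ w ∧ v1 = w ^ 2 :=
    ⟨Real.sqrt v1, Real.sqrt_nonneg v1, (Real.sq_sqrt hv1.le).symm⟩
  have hwpos : 0 < w := by nlinarith
  have hsqu : Real.sqrt (u ^ 2) = u := Real.sqrt_sq hu0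
  have hsqw : Real.sqrt (w ^ 2) = w := Real.sqrt_sq hw0
  have hsquw : Real.sqrt (w ^ 2 * u ^ 2) = w * u := by
    rw [Real.sqrt_mul (by positivity), hsqu, hsqw]
  rw [hsqu, hsqw, hsquw]
  have hpi := Real.pi_pos
  set s := Real.sin (δ / 2) with hs
  set c := Real.cos (δ / 2) with hc
  have hspos : 0 < s := Real.sin_pos_of_pos_of_lt_pi (by linarith) (by linarith)
  have hcneg : c < 0 := Real.cos_neg_of_pi_div_two_lt_of_lt (by linarith) (by linarith)
  have hsc : s ^ 2 + c ^ 2 = 1 := Real.sin_sq_add_cos_sq _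
  set D := w ^ 2 + u ^ 2 - 2 * (w * u) * c with hD
  have hDpos : 0 < D := by nlinarith [mul_nonneg hw0 hu0]
  set r := Real.sqrt D with hr
  have hrpos : 0 < r := Real.sqrt_pos.mpr hDpos
  have hr2 : r ^ 2 = D := Real.sq_sqrt hDpos.le
  have hCpos : 0 < s / r := div_pos hspos hrpos
  clear_value s c r
  rw [hD] at hr2
  clear_value D
  clear hD hr hDpos
  have hrne : r ≠ 0 := ne_of_gt hrpos
  have huc : u * c ≤ 0 := mul_nonpos_of_nonneg_of_nonpos hu0 hcneg.le
  have hwc : w * c ≤ 0 := mul_nonpos_of_nonneg_of_nonpos hw0 hcneg.le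
  have hb0 : s / r * u ≤ 1 := by
    rw [div_mul_eq_mul_div, div_le_one hrpos]
    have h2 : (s * u) ^ 2 ≤ r ^ 2 := by
      rw [hr2]; nlinarith [sq_nonneg (w - u * c)]
    nlinarith [mul_nonneg hspos.le hu0]
  have hb1 : s / r * w ≤ 1 := by
    rw [div_mul_eq_mul_div, div_le_one hrpos]
    have h2 : (s * w) ^ 2 ≤ r ^ 2 := by
      rw [hr2]; nlinarith [sq_nonneg (u - w * c)]
    nlinarith [mul_nonneg hspos.le hw0]
  have hb0' : (0:ℝ) ≤ s / r * u := mul_nonneg hCpos.le hu0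
  have hb1' : (0:ℝ) ≤ s / r * w := mul_nonneg hCpos.le hw0
  set a := Real.arccos (s / r * u) with ha
  set b := Real.arccos (s / r * w) with hb
  clear_value a b
  have hcosa : Real.cos a = s / r * u := by
    rw [ha]; exact Real.cos_arccos (by linarith) hb0
  have hcosb : Real.cos b = s / r * w := by
    rw [hb]; exact Real.cos_arccos (by linarith) hb1
  have ha2 : a ≤ Real.pi / 2 := ha ▸ Real.arccos_le_pi_div_two.mpr hb0'
  have hb2 : b ≤ Real.pi / 2 := hb ▸ Real.arccos_le_pi_div_two.mpr hb1'
  have ha0 : 0 ≤ a := ha ▸ Real.arccos_nonneg _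
  have hb0'' : 0 ≤ b := hb ▸ Real.arccos_nonneg _
  have hsina : Real.sin a = (w - u * c) / r := by
    rw [ha, Real.sin_arccos]
    have h1 : 1 - (s / r * u) ^ 2 = ((w - u * c) / r) ^ 2 := by
      linear_combination (norm := (field_simp; ring1)) (hr2 - u ^ 2 * hsc) / r ^ 2
    rw [h1, Real.sqrt_sq (div_nonneg (by linarith) hrpos.le)]
  have hsinb : Real.sin b = (u - w * c) / r := by
    rw [hb, Real.sin_arccos]
    have h1 : 1 - (s / r * w) ^ 2 = ((u - w * c) / r) ^ 2 := by
      linear_combination (norm := (field_simp; ring1)) (hr2 - w ^ 2 * hsc) / r ^ 2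
    rw [h1, Real.sqrt_sq (div_nonneg (by linarith) hrpos.le)]
  have hcosab : Real.cos (a + b) = c := by
    rw [Real.cos_add, hcosa, hcosb, hsina, hsinb]
    linear_combination (norm := (field_simp; ring1)) (u * w * hsc - c * hr2) / r ^ 2
  have hab : a + b = δ / 2 := by
    have h1 : Real.arccos (Real.cos (a + b)) = a + b :=
      Real.arccos_cos (by linarith) (by linarith)
    have h2 : Real.arccos (Real.cos (δ / 2)) = δ / 2 :=
      Real.arccos_cos (by linarith) (by linarith)
    rw [hcosab] at h1
    rw [← h1, hc]
    exact h2
  rw [hab]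
  have hsne : s ≠ 0 := ne_of_gt hspos
  field_simp
end

section
/- Let x₀, x₁ ∈ ℝ with x₀ ≠ x₁, and let y₀, y₁ ≥ 0 be not both zero. Let δ* be the unique solution in (−2π, 2π) of f(δ, y₀², y₁²) = x₁ − x₀, and set R₁ = π·(|x₁ − x₀| − 2y₁y₀) and R₂ = (δ*)²·(y₁² + y₀² − 2y₁y₀·cos(δ*/2)) / (2·sin²(δ*/2)). Then R₁ ≤ R₂. Moreover, if (1/2)·[π·(y₁² + y₀²) + 4y₁y₀] < |x₁ − x₀|, then R₁ < R₂. -/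
open Real Set

private lemma sin_ge_sub_cube {x : ℝ} (hx : 0 ≤ x) : x - x ^ 3 / 6 ≤ Real.sin x := by
  have mono : MonotoneOn (fun y : ℝ => Real.sin y - y + y ^ 3 / 6) (Set.Ici 0) := by
    apply monotoneOn_of_deriv_nonneg (convex_Ici 0)
    · fun_prop
    · apply Differentiable.differentiableOn; fun_prop
    · intro y _
      have hd : HasDerivAt (fun y : ℝ => Real.sin y - y + y ^ 3 / 6)
          (Real.cos y - 1 + (3 : ℕ) * y ^ (3 - 1) / 6) y :=
        ((Real.hasDerivAt_sin y).sub (hasDerivAt_id y)).add ((hasDerivAt_pow 3 y).div_const 6)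
      rw [hd.deriv]
      have := Real.one_sub_sq_div_two_le_cos (x := y)
      norm_num
      nlinarith [this]
  have h := mono (Set.self_mem_Ici (a := (0 : ℝ))) (Set.mem_Ici.2 hx) hx
  simp only [Real.sin_zero] at h
  norm_num at h
  linarith

private lemma A_pos {δ : ℝ} (h0 : 0 < δ) (h2 : δ < 2 * π) (hne : δ ≠ π) :
    0 < δ ^ 2 - π * δ + π * Real.sin δ := by
  have hπ : (3 : ℝ) < π := Real.pi_gt_three
  have hπ' : π < 3.15 := Real.pi_lt_d2
  rcases lt_trichotomy δ π with h | h | h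
  · rcases le_or_gt δ (π / 2) with hhalf | hhalf
    · have hsin := _root_.sin_ge_sub_cube h0.le
      nlinarith [mul_pos (mul_pos h0 h0) h0, mul_pos h0 h0]
    · -- use x = π - δ ∈ (0, π/2)
      have hx0 : 0 < π - δ := by linarith
      have hsin := _root_.sin_ge_sub_cube hx0.le
      have hs : Real.sin δ = Real.sin (π - δ) := (Real.sin_pi_sub δ).symm
      rw [← hs] at hsin
      nlinarith [mul_pos (mul_pos hx0 hx0) hx0, mul_pos hx0 hx0]
  · exact absurd h hne
  · -- δ > π : A = x² + π(x - sin x), x = δ - π > 0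
    have hx0 : 0 < δ - π := by linarith
    have hs : Real.sin δ = -Real.sin (δ - π) := by
      have h := Real.sin_add_pi (δ - π)
      rw [show δ - π + π = δ by ring] at h
      linarith
    have hle : Real.sin (δ - π) ≤ δ - π := Real.sin_le hx0.le
    nlinarith [mul_pos hx0 hx0]

private lemma A_nonneg {δ : ℝ} (h0 : 0 < δ) (h2 : δ < 2 * π) :
    0 ≤ δ ^ 2 - π * δ + π * Real.sin δ := by
  rcases eq_or_ne δ π with rfl | hne
  · simp [Real.sin_pi]; nlinarith [Real.pi_pos]
  · exact (A_pos h0 h2 hne).le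

private lemma k_pos {w : ℝ} (h1 : -(π / 2) < w) (h2 : w < π / 2) (hw : w ≠ 0) :
    0 < 2 * w ^ 2 + π * (w - Real.sin w) + π * (1 - Real.cos w) := by
  have hπ : (3 : ℝ) < π := Real.pi_gt_three
  have hπ' : π < 3.15 := Real.pi_lt_d2
  have hc : Real.cos w ≤ 1 := Real.cos_le_one w
  have hcterm : 0 ≤ π * (1 - Real.cos w) := by nlinarith
  rcases hw.lt_or_gt with h | h
  · -- w < 0
    have hx0 : 0 < -w := by linarith
    have hsin := _root_.sin_ge_sub_cube hx0.le
    rw [Real.sin_neg] at hsin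
    -- sin w ≤ w - w^3/6, and w > -π/2 > -12/π
    have h12 : 0 < 12 + π * w := by nlinarith
    have key : 0 < (-w) * (-w) * (12 + π * w) := mul_pos (mul_pos hx0 hx0) h12
    nlinarith [key, hsin]
  · have hs : Real.sin w ≤ w := Real.sin_le h.le
    have : 0 ≤ π * (w - Real.sin w) := by nlinarith
    nlinarith [mul_pos h h]

private lemma k_nonneg {w : ℝ} (h1 : -(π / 2) < w) (h2 : w < π / 2) :
    0 ≤ 2 * w ^ 2 + π * (w - Real.sin w) + π * (1 - Real.cos w) := by
  rcases eq_or_ne w 0 with rfl | hw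
  · simp
  · exact (k_pos h1 h2 hw).le

private lemma fdelta_neg (δ v0 v1 : ℝ) : fdelta (-δ) v0 v1 = -fdelta δ v0 v1 := by
  unfold fdelta
  rcases eq_or_ne δ 0 with rfl | h
  · simp
  · rw [if_neg (neg_ne_zero.2 h), if_neg h,
      show -δ / 2 = -(δ / 2) by ring, Real.sin_neg, Real.cos_neg, Real.sin_neg]
    ring

private lemma key (y0 y1 δ D : ℝ) (hy0 : 0 ≤ y0) (hy1 : 0 ≤ y1) (hy : ¬(y0 = 0 ∧ y1 = 0))
    (h0 : 0 < δ) (h2 : δ < 2 * π)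
    (hsol : fdelta δ (y0 ^ 2) (y1 ^ 2) = D) :
    π * (|D| - 2 * y1 * y0) ≤
      δ ^ 2 * (y1 ^ 2 + y0 ^ 2 - 2 * y1 * y0 * Real.cos (δ / 2)) /
        (2 * Real.sin (δ / 2) ^ 2) ∧
    (1 / 2 * (π * (y1 ^ 2 + y0 ^ 2) + 4 * y1 * y0) < |D| →
      π * (|D| - 2 * y1 * y0) <
        δ ^ 2 * (y1 ^ 2 + y0 ^ 2 - 2 * y1 * y0 * Real.cos (δ / 2)) /
          (2 * Real.sin (δ / 2) ^ 2)) := by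
  have hπ := Real.pi_pos
  set s := Real.sin (δ / 2) with hs_def
  set c := Real.cos (δ / 2) with hc_def
  have hs : 0 < s := by
    rw [hs_def]; exact Real.sin_pos_of_pos_of_lt_pi (by linarith) (by linarith)
  have hpyth : s ^ 2 + c ^ 2 = 1 := by
    rw [hs_def, hc_def]; exact Real.sin_sq_add_cos_sq _
  have hsin2 : Real.sin δ = 2 * s * c := by
    rw [hs_def, hc_def, ← Real.sin_two_mul]
    congr 1; ring
  have hsqrt : Real.sqrt (y1 ^ 2 * y0 ^ 2) = y1 * y0 := by
    rw [← mul_pow, Real.sqrt_sq (mul_nonneg hy1 hy0)]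
  have hD : D = ((y1 ^ 2 + y0 ^ 2) * (δ - Real.sin δ) - 2 * (y1 * y0) * (δ * c - 2 * s)) /
      (2 * s ^ 2) := by
    rw [← hsol, fdelta, if_neg (ne_of_gt h0), hsqrt, ← hs_def, ← hc_def]
  have hs2 : (0 : ℝ) < 2 * s ^ 2 := by positivity
  have hsinle : Real.sin δ ≤ δ := Real.sin_le h0.le
  have hc1 : c ≤ 1 := by rw [hc_def]; exact Real.cos_le_one _
  set N := (y1 ^ 2 + y0 ^ 2) * (δ - Real.sin δ) - 2 * (y1 * y0) * (δ * c - 2 * s) with hN_def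
  have hNid : N = (y1 - y0) ^ 2 * (δ - Real.sin δ) + 2 * (y1 * y0) * ((1 - c) * (δ + 2 * s)) := by
    rw [hN_def, hsin2]; ring
  have hNnn : 0 ≤ N := by
    rw [hNid]
    have t1 : 0 ≤ (y1 - y0) ^ 2 * (δ - Real.sin δ) := mul_nonneg (sq_nonneg _) (by linarith)
    have t2 : 0 ≤ 2 * (y1 * y0) * ((1 - c) * (δ + 2 * s)) :=
      mul_nonneg (by positivity) (mul_nonneg (by linarith) (by linarith))
    linarith
  have hDnn : 0 ≤ D := hD ▸ div_nonneg hNnn hs2.le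
  have habs : |D| = D := abs_of_nonneg hDnn
  -- abbreviations
  set A2 := δ ^ 2 - π * δ + π * (2 * s * c) with hA2_def
  set K := (δ - π) ^ 2 / 2 + π * ((δ - π) / 2 + c) + π * (1 - s) with hK_def
  have hA : 0 ≤ A2 := by
    have h := A_nonneg h0 h2
    rw [hsin2] at h; rw [hA2_def]; linarith
  have hsinw : Real.sin ((δ - π) / 2) = -c := by
    rw [hc_def, show δ / 2 = (δ - π) / 2 + π / 2 by ring, Real.cos_add_pi_div_two, neg_neg]
  have hcosw : Real.cos ((δ - π) / 2) = s := by
    rw [hs_def, show δ / 2 = (δ - π) / 2 + π / 2 by ring, Real.sin_add_pi_div_two]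
  have hK : 0 ≤ K := by
    have h := k_nonneg (w := (δ - π) / 2) (by linarith) (by linarith)
    rw [hsinw, hcosw] at h
    rw [hK_def, show (δ - π) ^ 2 / 2 + π * ((δ - π) / 2 + c) + π * (1 - s)
      = 2 * ((δ - π) / 2) ^ 2 + π * ((δ - π) / 2 - -c) + π * (1 - s) from by ring]
    exact h
  -- the key identity
  have hid : δ ^ 2 * (y1 ^ 2 + y0 ^ 2 - 2 * y1 * y0 * c) + 2 * π * (2 * (y1 * y0)) * s ^ 2 - π * N
      = (y1 - y0) ^ 2 * A2 + 4 * (y1 * y0) * ((1 - c) * K) := by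
    rw [hN_def, hA2_def, hK_def, hsin2]
    linear_combination (2 * π * (2 * (y1 * y0))) * hpyth
  have hE : π * N - 2 * π * (2 * (y1 * y0)) * s ^ 2 ≤
      δ ^ 2 * (y1 ^ 2 + y0 ^ 2 - 2 * y1 * y0 * c) := by
    have hrhs : 0 ≤ (y1 - y0) ^ 2 * A2 + 4 * (y1 * y0) * ((1 - c) * K) :=
      add_nonneg (mul_nonneg (sq_nonneg _) hA)
        (mul_nonneg (by positivity) (mul_nonneg (by linarith) hK))
    linarith [hid ▸ hrhs]
  have lhs_eq : π * (N / (2 * s ^ 2) - 2 * y1 * y0) =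
      (π * N - 2 * π * (2 * (y1 * y0)) * s ^ 2) / (2 * s ^ 2) := by
    field_simp
  constructor
  · rw [habs, hD, lhs_eq, div_le_div_iff₀ hs2 hs2]
    exact mul_le_mul_of_nonneg_right hE hs2.le
  · intro hcond
    -- δ ≠ π
    have hδπ : δ ≠ π := by
      intro heq
      have hs1 : s = 1 := by rw [hs_def, heq, Real.sin_pi_div_two]
      have hc0 : c = 0 := by rw [hc_def, heq, Real.cos_pi_div_two]
      have hsδ : Real.sin δ = 0 := by rw [heq, Real.sin_pi]
      rw [habs, hD] at hcond
      rw [hN_def, hs1, hc0, hsδ, heq] at hcond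
      ring_nf at hcond
      linarith
    have hA' : 0 < A2 := by
      have h := A_pos h0 h2 hδπ
      rw [hsin2] at h; rw [hA2_def]; linarith
    have hK' : 0 < K := by
      have hw : (δ - π) / 2 ≠ 0 := div_ne_zero (sub_ne_zero.mpr hδπ) two_ne_zero
      have h := k_pos (w := (δ - π) / 2) (by linarith) (by linarith) hw
      rw [hsinw, hcosw] at h
      rw [hK_def, show (δ - π) ^ 2 / 2 + π * ((δ - π) / 2 + c) + π * (1 - s)
        = 2 * ((δ - π) / 2) ^ 2 + π * ((δ - π) / 2 - -c) + π * (1 - s) from by ring]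
      exact h
    have hc1' : c < 1 := by
      rcases lt_or_eq_of_le hc1 with h | h
      · exact h
      · exfalso
        have : δ / 2 = 0 := by
          have := (Real.cos_eq_one_iff_of_lt_of_lt (x := δ / 2) (by linarith) (by linarith)).mp
            (by rw [← hc_def]; exact h)
          exact this
        linarith
    have hEpos : 0 < (y1 - y0) ^ 2 * A2 + 4 * (y1 * y0) * ((1 - c) * K) := by
      rcases ((mul_nonneg hy1 hy0).eq_or_lt.imp_left Eq.symm) with hb | hb
      · have hy2 : 0 < (y1 - y0) ^ 2 := by
          rcases mul_eq_zero.mp hb with h | h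
          · have h0' : y0 ≠ 0 := fun h0' => hy ⟨h0', h⟩
            rw [h, zero_sub, neg_sq]
            exact pow_pos (lt_of_le_of_ne hy0 (Ne.symm h0')) 2
          · have h1' : y1 ≠ 0 := fun h1' => hy ⟨h, h1'⟩
            rw [h, sub_zero]
            exact pow_pos (lt_of_le_of_ne hy1 (Ne.symm h1')) 2
        have hz : 0 ≤ 4 * (y1 * y0) * ((1 - c) * K) :=
          mul_nonneg (by positivity) (mul_nonneg (by linarith) hK)
        linarith [mul_pos hy2 hA']
      · have h1 : 0 ≤ (y1 - y0) ^ 2 * A2 := mul_nonneg (sq_nonneg _) hA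
        have h2' : 0 < 4 * (y1 * y0) * ((1 - c) * K) :=
          mul_pos (by linarith) (mul_pos (by linarith) hK')
        linarith
    have hE' : π * N - 2 * π * (2 * (y1 * y0)) * s ^ 2 <
        δ ^ 2 * (y1 ^ 2 + y0 ^ 2 - 2 * y1 * y0 * c) := by
      linarith [hid ▸ hEpos]
    rw [habs, hD, lhs_eq, div_lt_div_iff₀ hs2 hs2]
    exact mul_lt_mul_of_pos_right hE' hs2

/-- Lemma: with `δ*` the unique solution in `(−2π, 2π)` of `f(δ, y₀², y₁²) = x₁ − x₀`,
`R₁ = π(|x₁ − x₀| − 2y₁y₀)` and `R₂ = (δ*)²(y₁² + y₀² − 2y₁y₀cos(δ*/2))/(2sin²(δ*/2))`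
satisfy `R₁ ≤ R₂`, with strict inequality in the far regime. -/
theorem R1_le_R2 (x0 x1 y0 y1 δ : ℝ) (hx : x0 ≠ x1) (hy0 : 0 ≤ y0) (hy1 : 0 ≤ y1)
    (hy : ¬(y0 = 0 ∧ y1 = 0))
    (hδ : δ ∈ Set.Ioo (-(2 * Real.pi)) (2 * Real.pi))
    (hsol : fdelta δ (y0 ^ 2) (y1 ^ 2) = x1 - x0) :
    Real.pi * (|x1 - x0| - 2 * y1 * y0) ≤
      δ ^ 2 * (y1 ^ 2 + y0 ^ 2 - 2 * y1 * y0 * Real.cos (δ / 2)) /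
        (2 * Real.sin (δ / 2) ^ 2) ∧
    (1 / 2 * (Real.pi * (y1 ^ 2 + y0 ^ 2) + 4 * y1 * y0) < |x1 - x0| →
      Real.pi * (|x1 - x0| - 2 * y1 * y0) <
        δ ^ 2 * (y1 ^ 2 + y0 ^ 2 - 2 * y1 * y0 * Real.cos (δ / 2)) /
          (2 * Real.sin (δ / 2) ^ 2)) := by
  obtain ⟨hδ1, hδ2⟩ := hδ
  have hδ0 : δ ≠ 0 := by
    intro h
    rw [h] at hsol
    simp [fdelta] at hsol
    exact hx (by linarith)
  rcases hδ0.lt_or_gt with hneg | hpos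
  · have h' := key y0 y1 (-δ) (x0 - x1) hy0 hy1 hy (by linarith) (by linarith)
      (by rw [fdelta_neg, hsol]; ring)
    obtain ⟨h1, h2⟩ := h'
    rw [abs_sub_comm x0 x1] at h1 h2
    simp only [neg_div, Real.cos_neg, Real.sin_neg, neg_sq] at h1 h2
    exact ⟨h1, h2⟩
  · exact key y0 y1 δ (x1 - x0) hy0 hy1 hy hpos hδ2 hsol
end

section
/- For every δ with 0 < δ < π/2, one has δ·(π − δ)·sin(δ/2) ≥ 2π·cos(δ/2)·(1 − cos(δ/2)). -/
/-- For `0 < δ < π/2`, `δ(π − δ)·sin(δ/2) ≥ 2π·cos(δ/2)·(1 − cos(δ/2))`. -/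
theorem trig_ineq_three (δ : ℝ) (h0 : 0 < δ) (h1 : δ < Real.pi / 2) :
    2 * Real.pi * Real.cos (δ / 2) * (1 - Real.cos (δ / 2)) ≤
      δ * (Real.pi - δ) * Real.sin (δ / 2) := by
  have hpi := Real.pi_pos
  have hx0 : 0 < δ / 2 := by linarith
  have hx1 : δ / 2 < Real.pi / 2 := by linarith
  have hcpos : 0 < Real.cos (δ / 2) := Real.cos_pos_of_mem_Ioo ⟨by linarith, hx1⟩
  have hspos : 0 < Real.sin (δ / 2) := Real.sin_pos_of_pos_of_lt_pi hx0 (by linarith)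
  -- tan bound: δ/2 < tan(δ/2), so (δ/2) * cos(δ/2) < sin(δ/2)
  have htan := Real.lt_tan hx0 hx1
  rw [Real.tan_eq_sin_div_cos, lt_div_iff₀ hcpos] at htan
  -- 1 - cos(δ/2) ≤ (δ/2)^2 / 2 = δ^2/8
  have hq : 1 - Real.cos (δ / 2) ≤ δ ^ 2 / 8 := by
    have h4 : 0 < δ / 4 := by linarith
    have hs4 : Real.sin (δ / 4) ≤ δ / 4 := Real.sin_le (by linarith)
    have hs4' : 0 < Real.sin (δ / 4) := Real.sin_pos_of_pos_of_lt_pi h4 (by linarith)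
    have hc : Real.cos (δ / 2) = 1 - 2 * Real.sin (δ / 4) ^ 2 := by
      rw [show δ / 2 = 2 * (δ / 4) by ring, Real.cos_two_mul]
      nlinarith [Real.sin_sq_add_cos_sq (δ / 4)]
    nlinarith [hs4, hs4']
  have hc1 : Real.cos (δ / 2) ≤ 1 := Real.cos_le_one _
  have hpd : Real.pi / 2 ≤ Real.pi - δ := by linarith
  nlinarith [mul_le_mul_of_nonneg_left hq (le_of_lt hcpos),
    mul_lt_mul_of_pos_left htan hpi,
    mul_le_mul_of_nonneg_right hpd hspos.le, sq_nonneg δ]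
end

section
/- For every δ with 0 < δ < 2π, one has 6·sin(δ/2)·(1 + cos²(δ/2)) − δ·cos(δ/2)·(5 + cos²(δ/2)) > 0. -/
open Real Set

/-- Huygens' inequality: `3x < 2 sin x + tan x` for `0 < x < π/2`. -/
lemma huygens_aux (x : ℝ) (hx0 : 0 < x) (hx1 : x < Real.pi / 2) :
    3 * x < 2 * Real.sin x + Real.tan x := by
  have key : StrictMonoOn (fun y => 2 * Real.sin y + Real.tan y - 3 * y)
      (Set.Icc 0 x) := by
    apply strictMonoOn_of_deriv_pos (convex_Icc 0 x)
    · apply ContinuousOn.sub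
      · apply ContinuousOn.add
        · exact (continuous_const.mul Real.continuous_sin).continuousOn
        · apply Real.continuousOn_tan.mono
          intro y hy
          have hy1 : (0:ℝ) ≤ y := hy.1
          have hy2 : y ≤ x := hy.2
          have : Real.cos y > 0 := Real.cos_pos_of_mem_Ioo
            ⟨by linarith [Real.pi_pos], by linarith⟩
          exact ne_of_gt this
      · exact (continuous_const.mul continuous_id).continuousOn
    · intro y hy
      rw [interior_Icc] at hy
      obtain ⟨hy0, hyx⟩ := hy
      have hc : 0 < Real.cos y := Real.cos_pos_of_mem_Ioo
        ⟨by linarith [Real.pi_pos], by linarith⟩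
      have hc1 : Real.cos y < 1 := by
        calc Real.cos y < Real.cos 0 := by
              apply Real.cos_lt_cos_of_nonneg_of_le_pi le_rfl
              · linarith [Real.pi_pos, Real.pi_gt_three]
              · exact hy0
          _ = 1 := Real.cos_zero
      have hd : HasDerivAt (fun y => 2 * Real.sin y + Real.tan y - 3 * y)
          (2 * Real.cos y + 1 / Real.cos y ^ 2 - 3) y := by
        have h1 := (Real.hasDerivAt_sin y).const_mul 2
        have h2 := Real.hasDerivAt_tan (ne_of_gt hc)
        have h3 := (hasDerivAt_id y).const_mul 3
        exact ((h1.add h2).sub h3).congr_deriv (by ring)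
      rw [hd.deriv]
      have hc2 : 0 < Real.cos y ^ 2 := by positivity
      have heq : 2 * Real.cos y + 1 / Real.cos y ^ 2 - 3 =
          ((1 - Real.cos y) ^ 2 * (2 * Real.cos y + 1)) / Real.cos y ^ 2 := by
        field_simp; ring
      rw [heq]
      apply div_pos _ hc2
      have h1c : 0 < (1 - Real.cos y) ^ 2 := pow_pos (by linarith) 2
      nlinarith
  have h0mem : (0:ℝ) ∈ Set.Icc (0:ℝ) x := ⟨le_rfl, le_of_lt hx0⟩
  have hxmem : x ∈ Set.Icc (0:ℝ) x := ⟨le_of_lt hx0, le_rfl⟩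
  have := key h0mem hxmem hx0
  simp [Real.tan_zero] at this
  linarith

/-- For `0 < δ < 2π`, `6·sin(δ/2)·(1 + cos²(δ/2)) − δ·cos(δ/2)·(5 + cos²(δ/2)) > 0`. -/
theorem trig_ineq_five (δ : ℝ) (h0 : 0 < δ) (h1 : δ < 2 * Real.pi) :
    0 < 6 * Real.sin (δ / 2) * (1 + Real.cos (δ / 2) ^ 2) -
      δ * Real.cos (δ / 2) * (5 + Real.cos (δ / 2) ^ 2) := by
  set x := δ / 2 with hx
  have hx0 : 0 < x := by positivity
  have hxpi : x < Real.pi := by rw [hx]; linarith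
  have hs : 0 < Real.sin x := Real.sin_pos_of_pos_of_lt_pi hx0 hxpi
  have hδ : δ = 2 * x := by rw [hx]; ring
  rw [hδ]
  set s := Real.sin x
  set c := Real.cos x
  rcases le_or_gt c 0 with hc | hc
  · nlinarith [mul_nonneg (mul_nonneg hx0.le (neg_nonneg.mpr hc)) (by positivity : (0:ℝ) ≤ 5 + c^2),
      mul_pos hs (by positivity : (0:ℝ) < 1 + c^2)]
  · -- then x < π/2
    have hx2 : x < Real.pi / 2 := by
      by_contra h
      push_neg at h
      have : c ≤ 0 := Real.cos_nonpos_of_pi_div_two_le_of_le h (by linarith)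
      linarith
    have hH := huygens_aux x hx0 hx2
    rw [Real.tan_eq_sin_div_cos] at hH
    have hH2 : 3 * x * c < 2 * s * c + s := by
      have := mul_lt_mul_of_pos_right hH hc
      rw [add_mul, show Real.sin x / Real.cos x * c = s from div_mul_cancel₀ _ hc.ne'] at this
      linarith
    have hc1 : c < 1 := by
      calc c < Real.cos 0 := Real.cos_lt_cos_of_nonneg_of_le_pi le_rfl (le_of_lt hxpi) hx0
        _ = 1 := Real.cos_zero
    -- 9(1+c²) ≥ (2c+1)(5+c²) since 2(1-c)²(2-c) ≥ 0, and 3xc < s(2c+1)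
    nlinarith [mul_pos hs (mul_pos (mul_pos (sub_pos.mpr hc1) (sub_pos.mpr hc1)) (by linarith : (0:ℝ) < 2 - c)),
      mul_pos hs hc, sq_nonneg (1 - c), mul_pos hx0 hc,
      mul_lt_mul_of_pos_left hH2 (by positivity : (0:ℝ) < 5 + c^2)]
end
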